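/- arXiv:1709.03816 — 6 statements merged into one kernel-verified Lean document; each statement's English description precedes it below -/
import Mathlib

section
/- Let N ≥ 1 be an integer, let 1 ≤ q < 2, let Ω ⊆ ℝ^N be an open set, and let w be a classical Lane–Emden solution on Ω. Then for every δ > 0 and every smooth function φ : ℝ^N → ℝ with compact support contained in Ω, one has (1/δ)·(1 − 1/δ)·∫_Ω |∇w(x)/w(x)|² φ(x)² dx + (1/δ)·∫_Ω φ(x)²/w(x)^{2−q} dx ≤ ∫_Ω |∇φ(x)|² dx. -/
open MeasureTheory

/-- The Laplacian of a function on `ℝ^N`, computed as the sum of the second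
partial derivatives along the coordinate directions. -/
noncomputable def lap {N : ℕ} (f : EuclideanSpace ℝ (Fin N) → ℝ)
    (x : EuclideanSpace ℝ (Fin N)) : ℝ :=
  ∑ i : Fin N, fderiv ℝ (fun y => fderiv ℝ f y (EuclideanSpace.single i 1)) x
    (EuclideanSpace.single i 1)

/-- A classical Lane–Emden solution on an open set `Ω ⊆ ℝ^N`: twice continuously
differentiable on `Ω`, positive on `Ω`, and satisfying `-Δw = w^(q-1)` on `Ω`. -/
def IsLaneEmdenSolution {N : ℕ} (q : ℝ) (Ω : Set (EuclideanSpace ℝ (Fin N)))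
    (w : EuclideanSpace ℝ (Fin N) → ℝ) : Prop :=
  ContDiffOn ℝ 2 w Ω ∧ (∀ x ∈ Ω, 0 < w x) ∧ ∀ x ∈ Ω, -lap w x = w x ^ (q - 1)

open Set
open scoped RealInnerProductSpace

section Aux

variable {N : ℕ}

local notation "𝔼" => EuclideanSpace ℝ (Fin N)

lemma euclid_inner_eq_sum (a b : 𝔼) : ⟪a, b⟫ = ∑ i, a i * b i := by
  simp [PiLp.inner_apply, RCLike.inner_apply, conj_trivial, mul_comm]

lemma euclid_coord_eq_inner (a : 𝔼) (i : Fin N) : a i = ⟪a, EuclideanSpace.single i 1⟫ := by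
  simp [EuclideanSpace.inner_single_right]

lemma euclid_abs_coord_le_norm (a : 𝔼) (i : Fin N) : |a i| ≤ ‖a‖ := by
  rw [euclid_coord_eq_inner a i]
  calc |⟪a, EuclideanSpace.single i 1⟫|
      ≤ ‖a‖ * ‖EuclideanSpace.single i (1:ℝ)‖ := abs_real_inner_le_norm _ _
    _ = ‖a‖ := by simp

lemma gradient_inner_eq (f : 𝔼 → ℝ) (x v : 𝔼) : ⟪gradient f x, v⟫ = fderiv ℝ f x v := by
  simp [gradient, InnerProductSpace.toDual_symm_apply]

lemma gradient_coord (f : 𝔼 → ℝ) (x : 𝔼) (i : Fin N) :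
    gradient f x i = fderiv ℝ f x (EuclideanSpace.single i 1) := by
  rw [euclid_coord_eq_inner (gradient f x) i, gradient_inner_eq]

/-- Integrability on `Ω` for functions continuous on `Ω` and supported in a compact `K ⊆ Ω`. -/
lemma aux_integrableOn {Ω : Set 𝔼} (hΩ : IsOpen Ω)
    {K : Set 𝔼} (hK : IsCompact K) (hKΩ : K ⊆ Ω)
    {f : 𝔼 → ℝ} (hf : ContinuousOn f Ω)
    (h0 : ∀ x ∉ K, f x = 0) : IntegrableOn f Ω := by
  have h1 : IntegrableOn f K := (hf.mono hKΩ).integrableOn_compact hK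
  have h2 : IntegrableOn f (Ω \ K) := by
    have : EqOn f 0 (Ω \ K) := fun x hx => h0 x hx.2
    exact (integrableOn_congr_fun this (hΩ.measurableSet.diff hK.measurableSet)).mpr
      (integrableOn_zero)
  have : IntegrableOn f (K ∪ (Ω \ K)) := h1.union h2
  have hset : K ∪ (Ω \ K) = Ω := by
    rw [Set.union_diff_self, Set.union_eq_self_of_subset_left hKΩ]
  rwa [hset] at this

/-- **Divergence theorem** for compactly supported `C¹` vector fields on `ℝ^N`:
the integral of the divergence vanishes. -/
theorem div_integral_zero (hN : 1 ≤ N)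
    (F : 𝔼 → 𝔼) (F' : 𝔼 → 𝔼 →L[ℝ] 𝔼)
    (hF : ∀ x, HasFDerivAt F (F' x) x)
    (hdivc : Continuous fun x => ∑ i, F' x (EuclideanSpace.single i 1) i)
    {R : ℝ} (hR : 0 < R)
    (hsupp : ∀ x : 𝔼, R ≤ ‖x‖ → F x = 0) :
    ∫ x, ∑ i, F' x (EuclideanSpace.single i 1) i = 0 := by
  obtain ⟨n, rfl⟩ : ∃ n, N = n + 1 := ⟨N - 1, (Nat.succ_pred_eq_of_pos hN).symm⟩
  -- F' vanishes where ‖x‖ > R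
  have hF'0 : ∀ x : EuclideanSpace ℝ (Fin (n+1)), R < ‖x‖ → F' x = 0 := by
    intro x hx
    have hopen : IsOpen {y : EuclideanSpace ℝ (Fin (n+1)) | R < ‖y‖} :=
      isOpen_lt continuous_const continuous_norm
    have h1 : F =ᶠ[nhds x] fun _ => 0 := by
      filter_upwards [hopen.mem_nhds hx] with y hy
      exact hsupp y (le_of_lt hy)
    have h2 := h1.fderiv_eq (𝕜 := ℝ)
    rw [(hF x).fderiv] at h2
    rw [h2, fderiv_fun_const]
    simp
  -- the equivalence with the Pi type
  set L := EuclideanSpace.equiv (Fin (n+1)) ℝ with hL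
  have hLsymm : ∀ y : Fin (n+1) → ℝ, ∀ j, (L.symm y) j = y j := fun y j => rfl
  have hLsingle : ∀ i : Fin (n+1),
      L.symm (Pi.single i 1) = EuclideanSpace.single i (1:ℝ) := fun i => rfl
  -- components in Pi coordinates
  set g : Fin (n+1) → (Fin (n+1) → ℝ) → ℝ := fun i y => F (L.symm y) i with hg
  set g' : Fin (n+1) → (Fin (n+1) → ℝ) → (Fin (n+1) → ℝ) →L[ℝ] ℝ := fun i y =>
    (EuclideanSpace.proj i).comp ((F' (L.symm y)).comp
      (L.symm : (Fin (n+1) → ℝ) →L[ℝ] EuclideanSpace ℝ (Fin (n+1)))) with hg'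
  have hgderiv : ∀ i y, HasFDerivAt (g i) (g' i y) y := by
    intro i y
    have h1 : HasFDerivAt (fun z => F (L.symm z))
        ((F' (L.symm y)).comp (L.symm : (Fin (n+1) → ℝ) →L[ℝ] _)) y :=
      (hF (L.symm y)).comp y (L.symm.hasFDerivAt)
    exact ((EuclideanSpace.proj i).hasFDerivAt.comp y h1 : _)
  have hgdiv : ∀ y, (∑ i, g' i y (Pi.single i 1)) =
      ∑ i, F' (L.symm y) (EuclideanSpace.single i 1) i := by
    intro y
    refine Finset.sum_congr rfl fun i _ => ?_
    rfl
  -- the box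
  obtain ⟨a, b, hab, hbox⟩ : ∃ a b : Fin (n+1) → ℝ, a ≤ b ∧
      (∀ i, a i = -(R+1)) ∧ (∀ i, b i = R+1) := by
    exact ⟨fun _ => -(R+1), fun _ => R+1, fun i => by simp; linarith, fun i => rfl, fun i => rfl⟩
  obtain ⟨ha, hb⟩ := hbox
  have hbig : ∀ y : Fin (n+1) → ℝ, ∀ i, R + 1 ≤ |y i| → R < ‖L.symm y‖ := by
    intro y i hy
    have := euclid_abs_coord_le_norm (L.symm y) i
    rw [hLsymm y i] at this
    linarith
  -- divergence in pi coordinates is integrable on the box and continuous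
  have hdivpic : Continuous fun y => ∑ i, g' i y (Pi.single i 1) := by
    have : Continuous fun y : Fin (n+1) → ℝ =>
        ∑ i, F' (L.symm y) (EuclideanSpace.single i 1) i :=
      hdivc.comp L.symm.continuous
    exact this.congr fun y => (hgdiv y).symm
  have key := integral_divergence_of_hasFDerivAt_off_countable' a b hab
    g g' ∅ countable_empty ?_ ?_ ?_
  · -- now conclude
    have hfaces : ∀ (i : Fin (n+1)) (x : Fin n → ℝ) (c : ℝ), R + 1 ≤ |c| →
        g i (i.insertNth c x) = 0 := by
      intro i x c hc
      have : R < ‖L.symm (i.insertNth c x)‖ := by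
        refine hbig _ i ?_
        rw [Fin.insertNth_apply_same]
        exact hc
      simp only [hg]
      rw [hsupp _ (le_of_lt this)]
      rfl
    have hRHS : (∑ i : Fin (n+1),
        ((∫ x in Set.Icc (a ∘ i.succAbove) (b ∘ i.succAbove),
          g i (i.insertNth (b i) x)) -
         ∫ x in Set.Icc (a ∘ i.succAbove) (b ∘ i.succAbove),
          g i (i.insertNth (a i) x))) = 0 := by
      refine Finset.sum_eq_zero fun i _ => ?_
      have h1 : ∀ x : Fin n → ℝ, g i (i.insertNth (b i) x) = 0 := by
        intro x; refine hfaces i x _ ?_; rw [hb i]; rw [abs_of_pos (by linarith)]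
      have h2 : ∀ x : Fin n → ℝ, g i (i.insertNth (a i) x) = 0 := by
        intro x; refine hfaces i x _ ?_; rw [ha i]; rw [abs_neg, abs_of_pos (by linarith)]
      simp [h1, h2]
    -- key : ∫ over box of div_pi = faces
    have hdiv0 : ∀ y ∉ Set.Icc a b, (∑ i, g' i y (Pi.single i 1)) = 0 := by
      intro y hy
      have : ∃ i, ¬ (a i ≤ y i ∧ y i ≤ b i) := by
        by_contra h
        push_neg at h
        exact hy ⟨fun i => (h i).1, fun i => (h i).2⟩
      obtain ⟨i, hi⟩ := this
      have : R + 1 ≤ |y i| := by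
        rw [ha i, hb i] at hi
        rcases abs_cases (y i) with ⟨h1, h2⟩ | ⟨h1, h2⟩ <;> [skip; skip] <;>
        · by_contra hcon
          push_neg at hcon
          exact hi ⟨by linarith, by linarith⟩
      have hF'z : F' (L.symm y) = 0 := hF'0 _ (hbig y i this)
      rw [hgdiv y, hF'z]
      simp
    have hbox_univ : ∫ y in Set.Icc a b, (∑ i, g' i y (Pi.single i 1)) =
        ∫ y, ∑ i, g' i y (Pi.single i 1) :=
      setIntegral_eq_integral_of_forall_compl_eq_zero hdiv0
    -- transfer to EuclideanSpace
    have htrans : ∫ y : Fin (n+1) → ℝ, (∑ i, g' i y (Pi.single i 1)) =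
        ∫ x : EuclideanSpace ℝ (Fin (n+1)), ∑ i, F' x (EuclideanSpace.single i 1) i := by
      have hmp := (EuclideanSpace.volume_preserving_symm_measurableEquiv_toLp (Fin (n+1)))
      have h2 := hmp.integral_comp
        (MeasurableEquiv.toLp 2 (Fin (n+1) → ℝ)).symm.measurableEmbedding
        (fun y => ∑ i, g' i y (Pi.single i 1))
      rw [← h2]
      refine integral_congr_ae (Filter.Eventually.of_forall fun x => ?_)
      exact hgdiv ((MeasurableEquiv.toLp 2 (Fin (n+1) → ℝ)).symm x)
    rw [← htrans, ← hbox_univ, key, hRHS]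
  · -- continuity of components on the box
    intro i
    have : Continuous (g i) := by
      rw [continuous_iff_continuousAt]
      exact fun y => (hgderiv i y).continuousAt
    exact this.continuousOn
  · intro y _ i
    exact hgderiv i y
  · -- integrability of divergence on the box
    have : ContinuousOn (fun y => ∑ i, g' i y (Pi.single i 1)) (Set.Icc a b) :=
      hdivpic.continuousOn
    exact this.integrableOn_compact isCompact_Icc

end Aux

set_option maxHeartbeats 1600000 in
/-- **Hardy–Lane–Emden inequality.** -/
theorem hardy_lane_emden {N : ℕ} (hN : 1 ≤ N) {q : ℝ} (hq1 : 1 ≤ q) (hq2 : q < 2)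
    {Ω : Set (EuclideanSpace ℝ (Fin N))} (hΩ : IsOpen Ω)
    {w : EuclideanSpace ℝ (Fin N) → ℝ} (hw : IsLaneEmdenSolution q Ω w)
    {δ : ℝ} (hδ : 0 < δ)
    (φ : EuclideanSpace ℝ (Fin N) → ℝ) (hφ : ContDiff ℝ (⊤ : ℕ∞) φ)
    (hφc : HasCompactSupport φ) (hφΩ : tsupport φ ⊆ Ω) :
    (1 / δ) * (1 - 1 / δ) * (∫ x in Ω, (‖gradient w x‖ / w x) ^ 2 * (φ x) ^ 2)
      + (1 / δ) * (∫ x in Ω, (φ x) ^ 2 / w x ^ (2 - q))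
    ≤ ∫ x in Ω, ‖gradient φ x‖ ^ 2 := by
  classical
  obtain ⟨hw2, hwpos, hweq⟩ := hw
  set t : ℝ := 1/δ with ht
  have htpos : 0 < t := by positivity
  set K := tsupport φ with hKdef
  have hKc : IsCompact K := hφc
  have hKΩ : K ⊆ Ω := hφΩ
  have hφ0 : ∀ x ∉ K, φ x = 0 := fun x hx => image_eq_zero_of_notMem_tsupport hx
  have hdφ0 : ∀ x ∉ K, fderiv ℝ φ x = 0 := by
    intro x hx
    have : x ∉ Function.support (fderiv ℝ φ) := fun h => hx (support_fderiv_subset ℝ h)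
    simpa using Function.notMem_support.mp this
  have hφdiff : Differentiable ℝ φ := hφ.differentiable (by simp)
  have hφcont : Continuous φ := hφ.continuous
  have hwca : ∀ x ∈ Ω, ContDiffAt ℝ 2 w x := fun x hx => hw2.contDiffAt (hΩ.mem_nhds hx)
  have hwd : ∀ x ∈ Ω, DifferentiableAt ℝ w x := fun x hx =>
    (hwca x hx).differentiableAt (by norm_num)
  have hdw : ∀ x ∈ Ω, HasFDerivAt w (fderiv ℝ w x) x := fun x hx => (hwd x hx).hasFDerivAt
  have hHd : ∀ x ∈ Ω, DifferentiableAt ℝ (fderiv ℝ w) x := fun x hx =>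
    ((hwca x hx).fderiv_right (m := 1) (by norm_num)).differentiableAt (by norm_num)
  -- the linear identification of the dual with the space
  set TL : (EuclideanSpace ℝ (Fin N) →L[ℝ] ℝ) →L[ℝ] EuclideanSpace ℝ (Fin N) :=
    ContinuousLinearMap.mk
      { toFun := fun ℓ => (InnerProductSpace.toDual ℝ (EuclideanSpace ℝ (Fin N))).symm ℓ
        map_add' := fun a b => by simp
        map_smul' := fun r a => by simp }
      ((InnerProductSpace.toDual ℝ (EuclideanSpace ℝ (Fin N))).symm.continuous) with hTLdef
  have hTL : ∀ ℓ : EuclideanSpace ℝ (Fin N) →L[ℝ] ℝ,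
      TL ℓ = (InnerProductSpace.toDual ℝ (EuclideanSpace ℝ (Fin N))).symm ℓ := fun ℓ => rfl
  have hgradTL : ∀ (f : EuclideanSpace ℝ (Fin N) → ℝ) x, gradient f x = TL (fderiv ℝ f x) :=
    fun f x => rfl
  have hTLcoord : ∀ (ℓ : EuclideanSpace ℝ (Fin N) →L[ℝ] ℝ) i,
      (TL ℓ) i = ℓ (EuclideanSpace.single i 1) := by
    intro ℓ i
    rw [euclid_coord_eq_inner (TL ℓ) i, hTL]
    exact InnerProductSpace.toDual_symm_apply
  have hGd : ∀ x ∈ Ω, HasFDerivAt (gradient w) (TL.comp (fderiv ℝ (fderiv ℝ w) x)) x := by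
    intro x hx
    exact (TL.hasFDerivAt.comp x ((hHd x hx).hasFDerivAt) :)
  -- the scalar factor and its derivative
  set c : EuclideanSpace ℝ (Fin N) → ℝ := fun y => φ y ^ 2 / w y with hcdef
  set C : EuclideanSpace ℝ (Fin N) → EuclideanSpace ℝ (Fin N) →L[ℝ] ℝ := fun x =>
    (2 * φ x / w x) • fderiv ℝ φ x - (φ x ^ 2 / w x ^ 2) • fderiv ℝ w x with hCdef
  have hcd : ∀ x ∈ Ω, HasFDerivAt c (C x) x := by
    intro x hx
    have hwne : w x ≠ 0 := (hwpos x hx).ne'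
    have h1 : HasFDerivAt (fun y => φ y * φ y)
        (φ x • fderiv ℝ φ x + φ x • fderiv ℝ φ x) x :=
      (hφdiff x).hasFDerivAt.mul (hφdiff x).hasFDerivAt
    have h2 : HasFDerivAt (fun y => (w y)⁻¹) ((-(w x ^ 2)⁻¹) • fderiv ℝ w x) x :=
      (hasDerivAt_inv hwne).comp_hasFDerivAt x (hdw x hx)
    have h3 := h1.mul h2
    have hfun : c = fun y => (φ y * φ y) * (w y)⁻¹ := by
      funext y; simp only [hcdef]; rw [sq, div_eq_mul_inv]
    rw [hfun]
    refine h3.congr_fderiv ?_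
    ext v
    simp only [hCdef, ContinuousLinearMap.coe_sub', ContinuousLinearMap.coe_smul',
      Pi.sub_apply, Pi.smul_apply, smul_eq_mul, ContinuousLinearMap.add_apply,
      ContinuousLinearMap.smul_apply]
    ring
  -- the vector field and its derivative
  set G' : EuclideanSpace ℝ (Fin N) → EuclideanSpace ℝ (Fin N) →L[ℝ] EuclideanSpace ℝ (Fin N) :=
    fun x => TL.comp (fderiv ℝ (fderiv ℝ w) x) with hG'def
  set D : EuclideanSpace ℝ (Fin N) → EuclideanSpace ℝ (Fin N) →L[ℝ] EuclideanSpace ℝ (Fin N) :=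
    fun x => c x • G' x + (C x).smulRight (gradient w x) with hDdef
  set F : EuclideanSpace ℝ (Fin N) → EuclideanSpace ℝ (Fin N) :=
    fun x => c x • gradient w x with hFdef
  set F' : EuclideanSpace ℝ (Fin N) → EuclideanSpace ℝ (Fin N) →L[ℝ] EuclideanSpace ℝ (Fin N) :=
    fun x => if x ∈ Ω then D x else 0 with hF'def
  have hF0 : ∀ y ∉ K, F y = 0 := by
    intro y hy
    simp [hFdef, hcdef, hφ0 y hy]
  have hFderiv : ∀ x, HasFDerivAt F (F' x) x := by
    intro x
    by_cases hx : x ∈ Ω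
    · have : HasFDerivAt F (D x) x := (hcd x hx).smul (hGd x hx)
      simpa [hF'def, if_pos hx] using this
    · have hxK : x ∉ K := fun h => hx (hKΩ h)
      have hopen : IsOpen Kᶜ := hKc.isClosed.isOpen_compl
      have h0 : HasFDerivAt F
          (0 : EuclideanSpace ℝ (Fin N) →L[ℝ] EuclideanSpace ℝ (Fin N)) x := by
        have hc0 : HasFDerivAt (fun _ : EuclideanSpace ℝ (Fin N) => (0 : EuclideanSpace ℝ (Fin N)))
            (0 : EuclideanSpace ℝ (Fin N) →L[ℝ] EuclideanSpace ℝ (Fin N)) x :=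
          hasFDerivAt_const 0 x
        refine hc0.congr_of_eventuallyEq ?_
        filter_upwards [hopen.mem_nhds hxK] with y hy
        exact hF0 y hy
      simpa [hF'def, if_neg hx] using h0
  -- continuity facts
  have hwcont : ContinuousOn w Ω := hw2.continuousOn
  have hdwcont : ContinuousOn (fderiv ℝ w) Ω :=
    hw2.continuousOn_fderiv_of_isOpen hΩ (by norm_num)
  have hHcont : ContinuousOn (fderiv ℝ (fderiv ℝ w)) Ω :=
    (hw2.fderiv_of_isOpen (m := 1) hΩ (by norm_num)).continuousOn_fderiv_of_isOpen hΩ (by norm_num)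
  have hgradw_cont : ContinuousOn (gradient w) Ω :=
    (TL.continuous.comp_continuousOn hdwcont :)
  have hdφcont : Continuous (fderiv ℝ φ) := hφ.continuous_fderiv (by simp)
  have hgradφ_cont : Continuous (gradient φ) := (TL.continuous.comp hdφcont :)
  have hgradφ0 : ∀ x ∉ K, gradient φ x = 0 := by
    intro x hx
    rw [hgradTL φ x, hdφ0 x hx]
    simp
  have hwne : ∀ x ∈ Ω, w x ≠ 0 := fun x hx => (hwpos x hx).ne'
  have hccont : ContinuousOn c Ω :=
    ((hφcont.pow 2).continuousOn).div hwcont hwne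
  have hCcont : ContinuousOn C Ω := by
    refine ContinuousOn.sub ?_ ?_
    · exact (((continuous_const.mul hφcont).continuousOn).div hwcont hwne).smul
        hdφcont.continuousOn
    · exact (((hφcont.pow 2).continuousOn).div (hwcont.pow 2)
        (fun x hx => pow_ne_zero _ (hwne x hx))).smul hdwcont
  have hDcont : ContinuousOn D Ω := by
    refine ContinuousOn.add ?_ ?_
    · refine hccont.smul ?_
      exact ((ContinuousLinearMap.compL ℝ (EuclideanSpace ℝ (Fin N))
        (EuclideanSpace ℝ (Fin N) →L[ℝ] ℝ) (EuclideanSpace ℝ (Fin N)) TL).continuous.comp_continuousOn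
        hHcont :)
    · have h1 : ContinuousOn (fun x => (ContinuousLinearMap.smulRightL ℝ
          (EuclideanSpace ℝ (Fin N)) (EuclideanSpace ℝ (Fin N))) (C x)) Ω :=
        (ContinuousLinearMap.smulRightL ℝ _ _).continuous.comp_continuousOn hCcont
      exact h1.clm_apply hgradw_cont
  have hD0 : ∀ x, x ∈ Ω → x ∉ K → D x = 0 := by
    intro x hx hxK
    have hφx : φ x = 0 := hφ0 x hxK
    ext v
    simp [hDdef, hcdef, hCdef, hφx, zero_pow]
  have hF'0K : ∀ x ∉ K, F' x = 0 := by
    intro x hxK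
    by_cases hx : x ∈ Ω
    · simp only [hF'def, if_pos hx]; exact hD0 x hx hxK
    · simp [hF'def, if_neg hx]
  have hF'cont : Continuous F' := by
    rw [continuous_iff_continuousAt]
    intro x
    by_cases hx : x ∈ Ω
    · have heq : F' =ᶠ[nhds x] D := by
        filter_upwards [hΩ.mem_nhds hx] with y hy
        simp [hF'def, if_pos hy]
      exact (hDcont.continuousAt (hΩ.mem_nhds hx)).congr heq.symm
    · have hxK : x ∉ K := fun h => hx (hKΩ h)
      have heq : F' =ᶠ[nhds x] fun _ => 0 := by
        filter_upwards [(hKc.isClosed.isOpen_compl).mem_nhds hxK] with y hy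
        exact hF'0K y hy
      exact continuousAt_const.congr heq.symm
  -- the divergence of F
  set divF : EuclideanSpace ℝ (Fin N) → ℝ :=
    fun x => ∑ i, (F' x (EuclideanSpace.single i 1)) i with hdivFdef
  have hdivFcont : Continuous divF := by
    refine continuous_finset_sum _ fun i _ => ?_
    have h1 : Continuous fun x => F' x (EuclideanSpace.single i (1:ℝ)) :=
      (ContinuousLinearMap.apply ℝ (EuclideanSpace ℝ (Fin N))
        (EuclideanSpace.single i (1:ℝ))).continuous.comp hF'cont
    exact (EuclideanSpace.proj i).continuous.comp h1
  -- the divergence theorem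
  obtain ⟨R0, hR0⟩ := hKc.isBounded.subset_closedBall 0
  have hRpos : (0:ℝ) < max R0 0 + 1 := by positivity
  have hsupp : ∀ x : EuclideanSpace ℝ (Fin N), max R0 0 + 1 ≤ ‖x‖ → F x = 0 := by
    intro x hx
    refine hF0 x fun h => ?_
    have h2 := hR0 h
    rw [Metric.mem_closedBall, dist_zero_right] at h2
    have : R0 ≤ max R0 0 := le_max_left _ _
    linarith
  have hdivzero : ∫ x, divF x = 0 :=
    div_integral_zero hN F F' hFderiv hdivFcont hRpos hsupp
  have hΩint : ∫ x in Ω, divF x = 0 := by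
    rw [setIntegral_eq_integral_of_forall_compl_eq_zero (fun x hx => ?_)]
    · exact hdivzero
    · have hxK : x ∉ K := fun h => hx (hKΩ h)
      simp [hdivFdef, hF'0K x hxK]
  -- the three integrands
  set A : EuclideanSpace ℝ (Fin N) → ℝ :=
    fun x => (φ x / w x)^2 * ‖gradient w x‖^2 with hAdef
  set B : EuclideanSpace ℝ (Fin N) → ℝ :=
    fun x => (φ x / w x) * ⟪gradient φ x, gradient w x⟫ with hBdef
  -- pointwise identity for the divergence on Ω
  have hdivF_eq : ∀ x ∈ Ω, divF x = 2 * B x - A x - φ x ^ 2 / w x ^ (2 - q) := by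
    intro x hx
    have hwx : 0 < w x := hwpos x hx
    have hlapx : lap w x = ∑ i, (fderiv ℝ (fderiv ℝ w) x (EuclideanSpace.single i 1))
        (EuclideanSpace.single i 1) := by
      unfold lap
      refine Finset.sum_congr rfl fun i _ => ?_
      rw [fderiv_clm_apply (hHd x hx) (differentiableAt_const (EuclideanSpace.single i 1))]
      simp
    have hx2 : ∀ i : Fin N, (D x (EuclideanSpace.single i 1)) i =
        c x * ((fderiv ℝ (fderiv ℝ w) x (EuclideanSpace.single i 1)) (EuclideanSpace.single i 1))
        + ((2 * φ x / w x) * (gradient φ x i) - (φ x ^ 2 / w x ^ 2) * (gradient w x i))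
          * (gradient w x i) := by
      intro i
      have e1 : (D x (EuclideanSpace.single i 1)) i
          = c x * ((TL ((fderiv ℝ (fderiv ℝ w) x) (EuclideanSpace.single i 1))) i)
            + (C x (EuclideanSpace.single i 1)) * gradient w x i := by
        simp [hDdef, hG'def, PiLp.add_apply, PiLp.smul_apply, smul_eq_mul]
      rw [e1, hTLcoord]
      congr 1
      simp only [hCdef, ContinuousLinearMap.coe_sub', Pi.sub_apply,
        ContinuousLinearMap.coe_smul', Pi.smul_apply, smul_eq_mul]
      rw [gradient_coord φ x i, gradient_coord w x i]
    have hdivsum : divF x = c x * lap w x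
        + ((2 * φ x / w x) * ⟪gradient φ x, gradient w x⟫
           - (φ x ^ 2 / w x ^ 2) * ‖gradient w x‖^2) := by
      have e0 : divF x = ∑ i, (D x (EuclideanSpace.single i 1)) i := by
        simp [hdivFdef, hF'def, if_pos hx]
      rw [e0]
      have e1 : ∀ i : Fin N, (D x (EuclideanSpace.single i 1)) i =
          c x * ((fderiv ℝ (fderiv ℝ w) x (EuclideanSpace.single i 1)) (EuclideanSpace.single i 1))
          + ((2 * φ x / w x) * ((gradient φ x i) * (gradient w x i))
             - (φ x ^ 2 / w x ^ 2) * ((gradient w x i) * (gradient w x i))) := by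
        intro i; rw [hx2 i]; ring
      rw [Finset.sum_congr rfl fun i _ => e1 i, Finset.sum_add_distrib, ← Finset.mul_sum,
        ← hlapx, Finset.sum_sub_distrib, ← Finset.mul_sum, ← Finset.mul_sum,
        ← euclid_inner_eq_sum, ← euclid_inner_eq_sum]
      rw [real_inner_self_eq_norm_sq]
    have hlap_eq : lap w x = -(w x ^ (q-1)) := by
      have := hweq x hx; linarith
    have hpow : w x ^ (q-1) / w x = (w x ^ (2 - q))⁻¹ := by
      have h1 : w x ^ ((q-1) - 1 : ℝ) = w x ^ (q-1:ℝ) / w x ^ (1:ℝ) := Real.rpow_sub hwx _ _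
      rw [Real.rpow_one] at h1
      rw [← h1, show ((q-1) - 1 : ℝ) = -(2 - q) by ring, Real.rpow_neg hwx.le]
    have hcx : c x * lap w x = -(φ x ^ 2 / w x ^ (2 - q)) := by
      rw [hlap_eq]
      simp only [hcdef]
      rw [mul_neg, div_mul_eq_mul_div, mul_comm, ← div_mul_eq_mul_div, hpow]
      rw [div_eq_mul_inv (φ x ^ 2)]
      ring
    rw [hdivsum, hcx]
    simp only [hAdef, hBdef]
    rw [div_pow]
    ring
  -- integrability
  have hinner_cont : ContinuousOn (fun x => ⟪gradient φ x, gradient w x⟫) Ω :=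
    (hgradφ_cont.continuousOn).inner hgradw_cont
  have hAcont : ContinuousOn A Ω :=
    ((hφcont.continuousOn.div hwcont hwne).pow 2).mul
      ((hgradw_cont.norm).pow 2)
  have hBcont : ContinuousOn B Ω :=
    (hφcont.continuousOn.div hwcont hwne).mul hinner_cont
  have hPcont : ContinuousOn (fun x => φ x ^ 2 / w x ^ (2 - q)) Ω := by
    refine ((hφcont.pow 2).continuousOn).div
      (hwcont.rpow_const fun x hx => Or.inl (hwne x hx)) ?_
    exact fun x hx => (Real.rpow_pos_of_pos (hwpos x hx) _).ne'
  have hA0 : ∀ x ∉ K, A x = 0 := by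
    intro x hx; simp [hAdef, hφ0 x hx]
  have hB0 : ∀ x ∉ K, B x = 0 := by
    intro x hx; simp [hBdef, hφ0 x hx]
  have hP0 : ∀ x ∉ K, φ x ^ 2 / w x ^ (2 - q) = 0 := by
    intro x hx; simp [hφ0 x hx]
  have hintA : IntegrableOn A Ω := aux_integrableOn hΩ hKc hKΩ hAcont hA0
  have hintB : IntegrableOn B Ω := aux_integrableOn hΩ hKc hKΩ hBcont hB0
  have hintP : IntegrableOn (fun x => φ x ^ 2 / w x ^ (2 - q)) Ω :=
    aux_integrableOn hΩ hKc hKΩ hPcont hP0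
  have hintGφ : IntegrableOn (fun x => ‖gradient φ x‖^2) Ω := by
    refine aux_integrableOn hΩ hKc hKΩ ((hgradφ_cont.norm.pow 2).continuousOn) ?_
    intro x hx; simp [hgradφ0 x hx]
  -- the integration-by-parts identity
  have hI : ∫ x in Ω, φ x ^ 2 / w x ^ (2 - q)
      = 2 * (∫ x in Ω, B x) - ∫ x in Ω, A x := by
    have h1 : ∫ x in Ω, divF x
        = ∫ x in Ω, (2 * B x - A x - φ x ^ 2 / w x ^ (2 - q)) :=
      setIntegral_congr_fun hΩ.measurableSet fun x hx => hdivF_eq x hx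
    rw [hΩint] at h1
    have e1 : Integrable (fun x => 2 * B x - A x) (volume.restrict Ω) := by
      exact (hintB.const_mul 2).sub hintA
    have e2 : Integrable (fun x => 2 * B x) (volume.restrict Ω) := by
      exact hintB.const_mul 2
    rw [integral_sub e1 hintP, integral_sub e2 hintA, integral_const_mul] at h1
    linarith
  -- the pointwise inequality and conclusion
  have hmono : ∫ x in Ω, (2*t*B x - t^2*A x) ≤ ∫ x in Ω, ‖gradient φ x‖^2 := by
    have e1 : Integrable (fun x => 2*t*B x - t^2*A x) (volume.restrict Ω) := by
      exact (hintB.const_mul (2*t)).sub (hintA.const_mul (t^2))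
    refine setIntegral_mono_on e1 hintGφ hΩ.measurableSet ?_
    intro x hx
    have h0 : (0:ℝ) ≤ ‖gradient φ x - (t * φ x / w x) • gradient w x‖^2 := sq_nonneg _
    rw [norm_sub_sq_real, real_inner_smul_right, norm_smul] at h0
    simp only [Real.norm_eq_abs, mul_pow, sq_abs] at h0
    simp only [hAdef, hBdef]
    ring_nf at h0 ⊢
    nlinarith [h0]
  -- final assembly
  have hrw1 : ∫ x in Ω, (‖gradient w x‖ / w x) ^ 2 * (φ x) ^ 2 = ∫ x in Ω, A x := by
    refine setIntegral_congr_fun hΩ.measurableSet fun x hx => ?_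
    simp only [hAdef]
    rw [div_pow, div_pow]
    ring
  have hlin : ∫ x in Ω, (2*t*B x - t^2*A x)
      = 2*t*(∫ x in Ω, B x) - t^2*(∫ x in Ω, A x) := by
    have e1 : Integrable (fun x => 2*t*B x) (volume.restrict Ω) := by
      exact hintB.const_mul (2*t)
    have e2 : Integrable (fun x => t^2*A x) (volume.restrict Ω) := by
      exact hintA.const_mul (t^2)
    rw [integral_sub e1 e2, integral_const_mul, integral_const_mul]
  rw [hrw1, hI]
  calc t * (1 - t) * (∫ x in Ω, A x) + t * (2 * (∫ x in Ω, B x) - ∫ x in Ω, A x)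
      = 2*t*(∫ x in Ω, B x) - t^2*(∫ x in Ω, A x) := by ring
    _ = ∫ x in Ω, (2*t*B x - t^2*A x) := hlin.symm
    _ ≤ ∫ x in Ω, ‖gradient φ x‖^2 := hmono
end

section
/- Picone's inequality: let U ⊆ ℝ^N be open and let u, v : U → ℝ be differentiable on U with u > 0 on U. Then for every x ∈ U the function v²/u is differentiable at x and ⟨∇u(x), ∇(v²/u)(x)⟩ ≤ |∇v(x)|². -/
open MeasureTheory

lemma inner_gradient_eq' {F : Type*} [NormedAddCommGroup F] [InnerProductSpace ℝ F]
    [CompleteSpace F] (f : F → ℝ) (x y : F) :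
    (inner ℝ (gradient f x) y : ℝ) = fderiv ℝ f x y := by
  rw [gradient]
  exact InnerProductSpace.toDual_symm_apply

lemma picone_arith (a b s uu vv : ℝ) (hu : 0 < uu) (h1 : s ≤ b * a) (h2 : -(b * a) ≤ s) :
    2 * vv * s * uu - vv ^ 2 * a ^ 2 ≤ b ^ 2 * uu ^ 2 := by
  rcases le_or_gt 0 (uu * vv) with h | h
  · nlinarith [mul_nonneg h (sub_nonneg.mpr h1), sq_nonneg (vv * a - uu * b)]
  · nlinarith [mul_nonneg (neg_pos.mpr h).le (by linarith : (0:ℝ) ≤ s + b * a),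
      sq_nonneg (vv * a + uu * b)]

/-- **Picone's inequality.** If `u, v` are differentiable on an open set `U ⊆ ℝ^N`
with `u > 0` on `U`, then `v²/u` is differentiable at every point of `U` and
`⟨∇u, ∇(v²/u)⟩ ≤ |∇v|²` on `U`. -/
theorem picone_inequality {N : ℕ} {U : Set (EuclideanSpace ℝ (Fin N))} (hU : IsOpen U)
    {u v : EuclideanSpace ℝ (Fin N) → ℝ}
    (hu : ∀ x ∈ U, DifferentiableAt ℝ u x) (hv : ∀ x ∈ U, DifferentiableAt ℝ v x)
    (hupos : ∀ x ∈ U, 0 < u x) :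
    ∀ x ∈ U, DifferentiableAt ℝ (fun y => (v y) ^ 2 / u y) x ∧
      (inner ℝ (gradient u x) (gradient (fun y => (v y) ^ 2 / u y) x) : ℝ)
        ≤ ‖gradient v x‖ ^ 2 := by
  intro x hx
  have hux := hu x hx
  have hvx := hv x hx
  have hpos := hupos x hx
  have hne : u x ≠ 0 := ne_of_gt hpos
  have hUf : HasFDerivAt u (fderiv ℝ u x) x := hux.hasFDerivAt
  have hVf : HasFDerivAt v (fderiv ℝ v x) x := hvx.hasFDerivAt
  -- derivative of v^2
  have hsq : HasFDerivAt (fun y => v y ^ 2)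
      (v x • fderiv ℝ v x + v x • fderiv ℝ v x) x := by
    have := hVf.mul hVf
    exact this.congr_of_eventuallyEq (Filter.Eventually.of_forall fun y => by simp [pow_two])
  -- derivative of (u)⁻¹
  have hinv : HasFDerivAt (fun y => (u y)⁻¹)
      ((-(u x ^ 2)⁻¹) • fderiv ℝ u x) x :=
    (hasDerivAt_inv hne).comp_hasFDerivAt x hUf
  have hmul : HasFDerivAt (fun y => v y ^ 2 / u y)
      (v x ^ 2 • ((-(u x ^ 2)⁻¹) • fderiv ℝ u x)
        + (u x)⁻¹ • (v x • fderiv ℝ v x + v x • fderiv ℝ v x)) x := by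
    have := hsq.mul hinv
    exact this.congr_of_eventuallyEq (Filter.Eventually.of_forall fun y => by simp [div_eq_mul_inv])
  have hdiff : DifferentiableAt ℝ (fun y => (v y) ^ 2 / u y) x := hmul.differentiableAt
  refine ⟨hdiff, ?_⟩
  have hfd : fderiv ℝ (fun y => (v y) ^ 2 / u y) x
      = v x ^ 2 • ((-(u x ^ 2)⁻¹) • fderiv ℝ u x)
        + (u x)⁻¹ • (v x • fderiv ℝ v x + v x • fderiv ℝ v x) := hmul.fderiv
  have key : (inner ℝ (gradient u x) (gradient (fun y => (v y) ^ 2 / u y) x) : ℝ)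
      = fderiv ℝ (fun y => (v y) ^ 2 / u y) x (gradient u x) := by
    rw [real_inner_comm]
    exact inner_gradient_eq' _ x _
  have hUU : fderiv ℝ u x (gradient u x) = ‖gradient u x‖ ^ 2 := by
    rw [← inner_gradient_eq' u x (gradient u x), real_inner_self_eq_norm_sq]
  have hVU : fderiv ℝ v x (gradient u x) = inner ℝ (gradient v x) (gradient u x) := by
    rw [← inner_gradient_eq' v x (gradient u x)]
  rw [key, hfd]
  simp only [ContinuousLinearMap.add_apply, ContinuousLinearMap.smul_apply, smul_eq_mul,
    hUU, hVU]
  set A := ‖gradient u x‖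
  set B := ‖gradient v x‖
  set S : ℝ := inner ℝ (gradient v x) (gradient u x)
  have hS : |S| ≤ B * A := abs_real_inner_le_norm _ _
  have hS1 : S ≤ B * A := (abs_le.mp hS).2
  have hS2 : -(B * A) ≤ S := (abs_le.mp hS).1
  have hA : (0:ℝ) ≤ A := norm_nonneg _
  have hB : (0:ℝ) ≤ B := norm_nonneg _
  have h1 : (0:ℝ) ≤ (v x * A - u x * B) ^ 2 := sq_nonneg _
  have h2 : (0:ℝ) ≤ (v x * A + u x * B) ^ 2 := sq_nonneg _
  have hu2 : (0:ℝ) < u x ^ 2 := by positivity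
  have heq : v x ^ 2 * (-(u x ^ 2)⁻¹ * A ^ 2) + (u x)⁻¹ * (v x * S + v x * S)
      = (2 * v x * S * u x - v x ^ 2 * A ^ 2) / u x ^ 2 := by
    field_simp
    ring
  rw [heq, div_le_iff₀ hu2]
  exact picone_arith A B S (u x) (v x) hpos hS1 hS2
end

section
/- Let N ≥ 1, let 1 ≤ q < 2 and let Ω ⊆ ℝ^N be a nonempty bounded open set with λ_{2,q}(Ω) > 0. Then the infimum, over all nonnegative smooth functions φ : ℝ^N → ℝ with compact support contained in Ω, of the quantity (1/2)·∫_Ω |∇φ|² dx − (1/q)·∫_Ω φ^q dx equals ((q−2)/(2q))·(1/λ_{2,q}(Ω))^{q/(2−q)}. -/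
open MeasureTheory

/-- The optimal Poincaré constant `λ_{2,γ}(Ω)`: the infimum of `∫_Ω |∇φ|²` over smooth
compactly supported functions `φ` with support in `Ω` and `(∫_Ω |φ|^γ)^(1/γ) = 1`. -/
noncomputable def lambda2 {N : ℕ} (γ : ℝ) (Ω : Set (EuclideanSpace ℝ (Fin N))) : ℝ :=
  sInf { t : ℝ | ∃ φ : EuclideanSpace ℝ (Fin N) → ℝ, ContDiff ℝ (⊤ : ℕ∞) φ ∧
    HasCompactSupport φ ∧ tsupport φ ⊆ Ω ∧ (∫ x in Ω, |φ x| ^ γ) ^ (1 / γ) = 1 ∧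
    t = ∫ x in Ω, ‖gradient φ x‖ ^ 2 }

open InnerProductSpace Filter

section Auxiliary

/-- The key one-variable Young-type inequality. -/
lemma young_aux {q lam s : ℝ} (hq1 : 1 ≤ q) (hq2 : q < 2) (hl : 0 < lam) (hs : 0 ≤ s) :
    (q - 2) / (2 * q) * lam ^ (-(q / (2 - q))) ≤ lam * s ^ (2 / q) / 2 - s / q := by
  have hq0 : 0 < q := lt_of_lt_of_le one_pos hq1
  have h2q : 0 < 2 - q := by linarith
  have hpq : (2 / q).HolderConjugate (2 / (2 - q)) := by
    rw [Real.holderConjugate_iff]; constructor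
    · rw [lt_div_iff₀ hq0]; linarith
    · rw [inv_div, inv_div]; ring
  have hA : (0:ℝ) ≤ lam * s ^ (2 / q) := mul_nonneg hl.le (Real.rpow_nonneg hs _)
  have hx : (0:ℝ) ≤ (lam * s ^ (2 / q)) ^ (q / 2) := Real.rpow_nonneg hA _
  have hy : (0:ℝ) ≤ lam ^ (-(q / 2)) := Real.rpow_nonneg hl.le _
  have hY := Real.young_inequality_of_nonneg hx hy hpq
  have e1 : (lam * s ^ (2 / q)) ^ (q / 2) * lam ^ (-(q / 2)) = s := by
    rw [Real.mul_rpow hl.le (Real.rpow_nonneg hs _), ← Real.rpow_mul hs]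
    have : 2 / q * (q / 2) = 1 := by field_simp
    rw [this, Real.rpow_one, mul_comm (lam ^ (q/2)) s, mul_assoc, ← Real.rpow_add hl]
    norm_num
  have e2 : ((lam * s ^ (2 / q)) ^ (q / 2)) ^ (2 / q) = lam * s ^ (2 / q) := by
    rw [← Real.rpow_mul hA]
    have : q / 2 * (2 / q) = 1 := by field_simp
    rw [this, Real.rpow_one]
  have e3 : (lam ^ (-(q / 2))) ^ (2 / (2 - q)) = lam ^ (-(q / (2 - q))) := by
    rw [← Real.rpow_mul hl.le]
    congr 1
    field_simp
  rw [e1, e2, e3] at hY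
  set A := lam * s ^ (2 / q) with hAdef
  set M := lam ^ (-(q / (2 - q))) with hMdef
  have hY' : s ≤ q * A / 2 + (2 - q) * M / 2 := by
    rw [div_div_eq_mul_div, div_div_eq_mul_div] at hY
    calc s ≤ A * q / 2 + M * (2 - q) / 2 := hY
    _ = q * A / 2 + (2 - q) * M / 2 := by ring
  have h2q0 : (0:ℝ) < 2 * q := by linarith
  rw [div_mul_eq_mul_div, div_le_iff₀ h2q0]
  have : (A / 2 - s / q) * (2 * q) = q * A - 2 * s := by field_simp
  rw [this]
  linarith

lemma sqrt_aux_nonneg (y : ℝ) {δ : ℝ} (hδ : 0 < δ) : 0 ≤ Real.sqrt (y^2 + δ^2) - δ := by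
  rw [sub_nonneg]
  calc δ = Real.sqrt (δ^2) := (Real.sqrt_sq hδ.le).symm
  _ ≤ Real.sqrt (y^2 + δ^2) := Real.sqrt_le_sqrt (by nlinarith)

lemma sqrt_aux_le (y : ℝ) {δ : ℝ} (hδ : 0 < δ) : Real.sqrt (y^2 + δ^2) - δ ≤ |y| := by
  have h : Real.sqrt (y^2 + δ^2) ≤ |y| + δ := by
    have h1 : y^2 + δ^2 ≤ (|y| + δ)^2 := by nlinarith [abs_nonneg y, sq_abs y]
    calc Real.sqrt (y^2 + δ^2) ≤ Real.sqrt ((|y| + δ)^2) := Real.sqrt_le_sqrt h1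
    _ = |y| + δ := Real.sqrt_sq (by positivity)
  linarith

lemma hasDerivAt_sqrt_aux (y : ℝ) {δ : ℝ} (hδ : 0 < δ) :
    HasDerivAt (fun z => Real.sqrt (z^2 + δ^2) - δ) (y / Real.sqrt (y^2 + δ^2)) y := by
  have hpos : 0 < y^2 + δ^2 := by positivity
  have h1 : HasDerivAt (fun z : ℝ => z^2 + δ^2) (2*y) y := by
    simpa using (hasDerivAt_pow 2 y).add_const (δ^2)
  have h2 := (Real.hasDerivAt_sqrt hpos.ne').comp y h1
  have hs : Real.sqrt (y^2 + δ^2) ≠ 0 := by positivity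
  have he : 1 / (2 * Real.sqrt (y^2 + δ^2)) * (2*y) = y / Real.sqrt (y^2 + δ^2) := by
    field_simp
  rw [he] at h2
  simpa [Function.comp_def] using h2.sub_const δ

lemma deriv_sqrt_aux_le (y : ℝ) {δ : ℝ} (hδ : 0 < δ) : |y / Real.sqrt (y^2 + δ^2)| ≤ 1 := by
  have hpos : 0 < Real.sqrt (y^2 + δ^2) := Real.sqrt_pos.2 (by positivity)
  rw [abs_div, abs_of_pos hpos, div_le_one hpos, ← Real.sqrt_sq_eq_abs]
  exact Real.sqrt_le_sqrt (by nlinarith)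

variable {F : Type*} [NormedAddCommGroup F] [InnerProductSpace ℝ F] [CompleteSpace F]

lemma gradient_def' (f : F → ℝ) (x : F) :
    gradient f x = (toDual ℝ F).symm (fderiv ℝ f x) := rfl

lemma gradient_const_mul {f : F → ℝ} {x : F} (hf : DifferentiableAt ℝ f x) (c : ℝ) :
    gradient (fun y => c * f y) x = c • gradient f x := by
  rw [gradient_def', gradient_def', fderiv_const_mul hf c, _root_.map_smul]

lemma gradient_comp_scalar {f : F → ℝ} {g : ℝ → ℝ} {g' : ℝ} {x : F}
    (hf : DifferentiableAt ℝ f x) (hg : HasDerivAt g g' (f x)) :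
    gradient (fun y => g (f y)) x = g' • gradient f x := by
  have h := (hg.comp_hasFDerivAt x hf.hasFDerivAt).fderiv
  rw [gradient_def', gradient_def', show (fun y => g (f y)) = g ∘ f from rfl, h, _root_.map_smul]

lemma continuous_gradient {f : F → ℝ} (hf : ContDiff ℝ (⊤ : ℕ∞) f) :
    Continuous (gradient f) := by
  have h : Continuous (fderiv ℝ f) := hf.continuous_fderiv (by simp)
  exact (toDual ℝ F).symm.continuous.comp h

omit [CompleteSpace F] in
lemma contDiff_psi {f : F → ℝ} (hf : ContDiff ℝ (⊤ : ℕ∞) f) {δ : ℝ} (hδ : 0 < δ) :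
    ContDiff ℝ (⊤ : ℕ∞) (fun x => Real.sqrt ((f x)^2 + δ^2) - δ) := by
  rw [contDiff_iff_contDiffAt]
  intro x
  have hpos : (0:ℝ) < (f x)^2 + δ^2 := by positivity
  have h1 : ContDiffAt ℝ (⊤ : ℕ∞) (fun x => (f x)^2 + δ^2) x :=
    ((hf.pow 2).add contDiff_const).contDiffAt
  exact ((Real.contDiffAt_sqrt hpos.ne').comp x h1).sub contDiffAt_const

lemma continuous_rpow_of_nonneg {X : Type*} [TopologicalSpace X] {f : X → ℝ} {q : ℝ}
    (hf : Continuous f) (h0 : ∀ x, 0 ≤ f x) (hq : 0 ≤ q) :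
    Continuous fun x => f x ^ q := by
  rw [continuous_iff_continuousAt]
  intro x
  exact (Real.continuousAt_rpow_const _ q (Or.inr hq)).comp hf.continuousAt

lemma integrableOn_of_continuous {N : ℕ} {Ω : Set (EuclideanSpace ℝ (Fin N))}
    (hΩb : Bornology.IsBounded Ω) {f : EuclideanSpace ℝ (Fin N) → ℝ} (hf : Continuous f) :
    IntegrableOn f Ω :=
  (hf.locallyIntegrable.integrableOn_isCompact hΩb.isCompact_closure).mono_set subset_closure

end Auxiliary

/-- The value of the Lane–Emden variational problem in terms of `λ_{2,q}(Ω)`. -/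
theorem lane_emden_min_value {N : ℕ} (hN : 1 ≤ N) {q : ℝ} (hq1 : 1 ≤ q) (hq2 : q < 2)
    {Ω : Set (EuclideanSpace ℝ (Fin N))} (hΩo : IsOpen Ω)
    (hΩb : Bornology.IsBounded Ω) (hne : Ω.Nonempty) (hlam : 0 < lambda2 q Ω) :
    sInf { t : ℝ | ∃ φ : EuclideanSpace ℝ (Fin N) → ℝ, ContDiff ℝ (⊤ : ℕ∞) φ ∧
      HasCompactSupport φ ∧ tsupport φ ⊆ Ω ∧ (∀ x, 0 ≤ φ x) ∧
      t = (1 / 2) * (∫ x in Ω, ‖gradient φ x‖ ^ 2) - (1 / q) * (∫ x in Ω, φ x ^ q) }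
    = ((q - 2) / (2 * q)) * (1 / lambda2 q Ω) ^ (q / (2 - q)) := by
  have hq0 : (0:ℝ) < q := lt_of_lt_of_le one_pos hq1
  have h2q : (0:ℝ) < 2 - q := by linarith
  set lam := lambda2 q Ω with hlamdef
  set M : ℝ := lam ^ (-(q / (2 - q))) with hMdef
  have hMpos : 0 < M := Real.rpow_pos_of_pos hlam _
  have hRHSeq : (1 / lam) ^ (q / (2 - q)) = M := by
    rw [one_div, Real.inv_rpow hlam.le, ← Real.rpow_neg hlam.le]
  set S := { t : ℝ | ∃ φ : EuclideanSpace ℝ (Fin N) → ℝ, ContDiff ℝ (⊤ : ℕ∞) φ ∧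
    HasCompactSupport φ ∧ tsupport φ ⊆ Ω ∧ (∫ x in Ω, |φ x| ^ q) ^ (1 / q) = 1 ∧
    t = ∫ x in Ω, ‖gradient φ x‖ ^ 2 } with hSdef
  have hlamS : lam = sInf S := rfl
  set T := { t : ℝ | ∃ φ : EuclideanSpace ℝ (Fin N) → ℝ, ContDiff ℝ (⊤ : ℕ∞) φ ∧
      HasCompactSupport φ ∧ tsupport φ ⊆ Ω ∧ (∀ x, 0 ≤ φ x) ∧
      t = (1 / 2) * (∫ x in Ω, ‖gradient φ x‖ ^ 2) - (1 / q) * (∫ x in Ω, φ x ^ q) } with hTdef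
  rw [hRHSeq]
  have hS0 : ∀ t ∈ S, 0 ≤ t := by
    rintro t ⟨φ, -, -, -, -, rfl⟩
    exact integral_nonneg fun x => by positivity
  have hSbdd : BddBelow S := ⟨0, hS0⟩
  have hSne : S.Nonempty := by
    by_contra h
    rw [Set.not_nonempty_iff_eq_empty] at h
    rw [hlamS, h, Real.sInf_empty] at hlam
    exact lt_irrefl 0 hlam
  have hdifftop : ((⊤ : ℕ∞) : WithTop ℕ∞) ≠ 0 := by simp
  have hmulsupp : ∀ (g : EuclideanSpace ℝ (Fin N) → ℝ) (a : ℝ),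
      Function.support (fun y => a * g y) ⊆ Function.support g := by
    intro g a x hx
    rw [Function.mem_support] at hx ⊢
    exact fun h => hx (by rw [h, mul_zero])
  have lower : ∀ t ∈ T, (q - 2) / (2 * q) * M ≤ t := by
    rintro t ⟨φ, hsm, hcs, hsupp, hφ0, rfl⟩
    set A := ∫ x in Ω, ‖gradient φ x‖^2 with hAdef
    set I := ∫ x in Ω, φ x ^ q with hIdef
    have hA0 : 0 ≤ A := integral_nonneg fun x => by positivity
    have hI0 : 0 ≤ I := integral_nonneg fun x => Real.rpow_nonneg (hφ0 x) q
    have hRHSneg : (q - 2) / (2 * q) * M ≤ 0 :=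
      mul_nonpos_of_nonpos_of_nonneg
        (div_nonpos_iff.mpr (Or.inr ⟨by linarith, by linarith⟩)) hMpos.le
    rcases eq_or_lt_of_le hI0 with hI0' | hIpos
    · calc (q - 2) / (2 * q) * M ≤ 0 := hRHSneg
      _ ≤ 1 / 2 * A - 1 / q * I := by rw [← hI0']; ring_nf; positivity
    · set c := I ^ (-(1/q)) with hcdef
      have hcpos : 0 < c := Real.rpow_pos_of_pos hIpos _
      have hmem : (∫ x in Ω, ‖gradient (fun y => c * φ y) x‖ ^ 2) ∈ S := by
        refine ⟨fun y => c * φ y, contDiff_const.mul hsm,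
          hcs.mono (hmulsupp φ c), le_trans (closure_mono (hmulsupp φ c)) hsupp,
          ?_, rfl⟩
        have h1 : ∀ x : EuclideanSpace ℝ (Fin N), |c * φ x| ^ q = c ^ q * (φ x ^ q) := fun x => by
          rw [abs_mul, abs_of_pos hcpos, abs_of_nonneg (hφ0 x),
            Real.mul_rpow hcpos.le (hφ0 x)]
        have h2 : ∫ x in Ω, |c * φ x| ^ q = c ^ q * I := by
          simp_rw [h1]
          rw [integral_const_mul]
        have hcq : c ^ q = I⁻¹ := by
          rw [hcdef, ← Real.rpow_mul hI0]
          have : -(1/q) * q = -1 := by field_simp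
          rw [this, Real.rpow_neg_one]
        rw [h2, hcq, inv_mul_cancel₀ (ne_of_gt hIpos), Real.one_rpow]
      have hle : lam ≤ ∫ x in Ω, ‖gradient (fun y => c * φ y) x‖ ^ 2 := by
        rw [hlamS]; exact csInf_le hSbdd hmem
      have hval : (∫ x in Ω, ‖gradient (fun y => c * φ y) x‖ ^ 2) = c ^ 2 * A := by
        have hgr : ∀ x : EuclideanSpace ℝ (Fin N),
            ‖gradient (fun y => c * φ y) x‖ ^ 2 = c ^ 2 * ‖gradient φ x‖ ^ 2 := fun x => by
          rw [gradient_const_mul ((hsm.differentiable hdifftop) x) c, norm_smul,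
            Real.norm_eq_abs, abs_of_pos hcpos, mul_pow]
        simp_rw [hgr]
        rw [integral_const_mul]
      have hc2 : c ^ 2 = I ^ (-(2/q)) := by
        rw [hcdef, ← Real.rpow_natCast (I ^ (-(1/q))) 2, ← Real.rpow_mul hI0]
        congr 1
        push_cast
        ring
      have hA_ge : lam * I ^ (2/q) ≤ A := by
        rw [hval, hc2] at hle
        have h4 : I ^ (2/q) * I ^ (-(2/q)) = 1 := by
          rw [← Real.rpow_add hIpos]; norm_num
        calc lam * I ^ (2/q) = I ^ (2/q) * lam := mul_comm _ _
        _ ≤ I ^ (2/q) * (I ^ (-(2/q)) * A) :=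
          mul_le_mul_of_nonneg_left hle (Real.rpow_nonneg hI0 _)
        _ = (I ^ (2/q) * I ^ (-(2/q))) * A := by ring
        _ = A := by rw [h4, one_mul]
      have hY := young_aux hq1 hq2 hlam hI0
      calc (q - 2) / (2 * q) * M ≤ lam * I ^ (2/q) / 2 - I / q := hY
      _ ≤ A / 2 - I / q := by linarith
      _ = 1 / 2 * A - 1 / q * I := by ring
  have upper : ∀ ε : ℝ, 0 < ε → ∃ t ∈ T, t ≤ (q - 2) / (2 * q) * M + ε := by
    intro ε hε
    set t0 := lam ^ (-(1/(2-q))) with ht0def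
    have ht0pos : 0 < t0 := Real.rpow_pos_of_pos hlam _
    have ht0q : t0 ^ q = M := by
      rw [ht0def, ← Real.rpow_mul hlam.le, hMdef]
      congr 1
      field_simp
    have ht02 : t0 ^ 2 * lam = M := by
      have e1 : t0 ^ 2 = lam ^ (-(2/(2-q))) := by
        rw [ht0def, ← Real.rpow_natCast (lam ^ (-(1/(2-q)))) 2, ← Real.rpow_mul hlam.le]
        congr 1
        push_cast
        ring
      rw [e1]
      nth_rewrite 2 [← Real.rpow_one lam]
      rw [← Real.rpow_add hlam, hMdef]
      congr 1
      field_simp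
      ring
    set ε₁ := ε / t0 ^ 2 with hε₁def
    set ε₂ := q * ε / (2 * t0 ^ q) with hε₂def
    have ht0qpos : 0 < t0 ^ q := Real.rpow_pos_of_pos ht0pos _
    have hε₁pos : 0 < ε₁ := by positivity
    have hε₂pos : 0 < ε₂ := by positivity
    obtain ⟨A, hAS, hAlt⟩ := Real.lt_sInf_add_pos hSne hε₁pos
    rw [← hlamS] at hAlt
    obtain ⟨φ, hsm, hcs, hsuppφ, hnorm, hAeq⟩ := hAS
    have hIφ : ∫ x in Ω, |φ x| ^ q = 1 := by
      have h0 : 0 ≤ ∫ x in Ω, |φ x| ^ q :=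
        integral_nonneg fun x => Real.rpow_nonneg (abs_nonneg _) _
      have h2 : ((∫ x in Ω, |φ x| ^ q) ^ (1/q)) ^ q = 1 ^ q := by rw [hnorm]
      rw [← Real.rpow_mul h0] at h2
      have h3 : 1/q * q = 1 := by field_simp
      rwa [h3, Real.rpow_one, Real.one_rpow] at h2
    have htend : Filter.Tendsto
        (fun δ : ℝ => ∫ x in Ω, (Real.sqrt ((φ x)^2 + δ^2) - δ) ^ q)
        (nhdsWithin 0 (Set.Ioi 0)) (nhds 1) := by
      rw [← hIφ]
      apply tendsto_integral_filter_of_dominated_convergence (fun x => |φ x| ^ q)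
      · filter_upwards [eventually_mem_nhdsWithin] with δ hδ
        have hδ' : (0:ℝ) < δ := hδ
        apply Continuous.aestronglyMeasurable
        exact continuous_rpow_of_nonneg
          ((Real.continuous_sqrt.comp ((hsm.continuous.pow 2).add continuous_const)).sub
            continuous_const)
          (fun x => sqrt_aux_nonneg _ hδ') hq0.le
      · filter_upwards [eventually_mem_nhdsWithin] with δ hδ
        have hδ' : (0:ℝ) < δ := hδ
        apply Filter.Eventually.of_forall
        intro x
        rw [Real.norm_eq_abs, abs_of_nonneg (Real.rpow_nonneg (sqrt_aux_nonneg _ hδ') _)]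
        exact Real.rpow_le_rpow (sqrt_aux_nonneg _ hδ') (sqrt_aux_le _ hδ') hq0.le
      · exact integrableOn_of_continuous hΩb
          (continuous_rpow_of_nonneg hsm.continuous.abs (fun x => abs_nonneg _) hq0.le)
      · apply Filter.Eventually.of_forall
        intro x
        have hc : Continuous (fun δ : ℝ => Real.sqrt ((φ x)^2 + δ^2) - δ) :=
          (Real.continuous_sqrt.comp (continuous_const.add (continuous_pow 2))).sub
            continuous_id
        have h1 : Filter.Tendsto (fun δ : ℝ => Real.sqrt ((φ x)^2 + δ^2) - δ)
            (nhds 0) (nhds |φ x|) := by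
          have := hc.tendsto 0
          simpa [Real.sqrt_sq_eq_abs] using this
        have h2 : ContinuousAt (fun y : ℝ => y ^ q) |φ x| :=
          Real.continuousAt_rpow_const _ _ (Or.inr hq0.le)
        exact h2.tendsto.comp (h1.mono_left nhdsWithin_le_nhds)
    have hlt : (1:ℝ) - ε₂ < 1 := by linarith
    have hev := htend.eventually (eventually_gt_nhds hlt)
    obtain ⟨δ, hBq, hδmem⟩ := (hev.and eventually_mem_nhdsWithin).exists
    have hδpos : (0:ℝ) < δ := hδmem
    set ψ : EuclideanSpace ℝ (Fin N) → ℝ := fun x => Real.sqrt ((φ x)^2 + δ^2) - δ with hψdef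
    have hψ0 : ∀ x, 0 ≤ ψ x := fun x => sqrt_aux_nonneg _ hδpos
    have hψsm : ContDiff ℝ (⊤ : ℕ∞) ψ := contDiff_psi hsm hδpos
    have hψsupp : Function.support ψ ⊆ Function.support φ := by
      intro x hx
      rw [Function.mem_support] at hx ⊢
      intro h0
      apply hx
      simp [hψdef, h0, Real.sqrt_sq hδpos.le]
    have hψcs : HasCompactSupport ψ := hcs.mono hψsupp
    have hψΩ : tsupport ψ ⊆ Ω := le_trans (closure_mono hψsupp) hsuppφ
    have hgradψ : ∀ x, ‖gradient ψ x‖ ≤ ‖gradient φ x‖ := by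
      intro x
      have h := gradient_comp_scalar (f := φ) (x := x)
        ((hsm.differentiable hdifftop) x) (hasDerivAt_sqrt_aux (φ x) hδpos)
      have hψx : gradient ψ x = (φ x / Real.sqrt ((φ x)^2 + δ^2)) • gradient φ x := h
      rw [hψx, norm_smul, Real.norm_eq_abs]
      calc |φ x / Real.sqrt ((φ x)^2 + δ^2)| * ‖gradient φ x‖ ≤ 1 * ‖gradient φ x‖ :=
        mul_le_mul_of_nonneg_right (deriv_sqrt_aux_le _ hδpos) (norm_nonneg _)
      _ = ‖gradient φ x‖ := one_mul _
    have hAψle : (∫ x in Ω, ‖gradient ψ x‖ ^ 2) ≤ A := by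
      rw [hAeq]
      apply integral_mono
        (integrableOn_of_continuous hΩb ((continuous_gradient hψsm).norm.pow 2))
        (integrableOn_of_continuous hΩb ((continuous_gradient hsm).norm.pow 2))
      intro x
      exact pow_le_pow_left₀ (norm_nonneg _) (hgradψ x) 2
    refine ⟨(1 / 2) * (∫ x in Ω, ‖gradient (fun y => t0 * ψ y) x‖ ^ 2) -
        (1 / q) * (∫ x in Ω, (t0 * ψ x) ^ q),
      ⟨fun y => t0 * ψ y, contDiff_const.mul hψsm, hψcs.mono (hmulsupp ψ t0),
        le_trans (closure_mono (hmulsupp ψ t0)) hψΩ,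
        fun x => mul_nonneg ht0pos.le (hψ0 x), rfl⟩, ?_⟩
    have e1 : (∫ x in Ω, ‖gradient (fun y => t0 * ψ y) x‖ ^ 2)
        = t0 ^ 2 * ∫ x in Ω, ‖gradient ψ x‖ ^ 2 := by
      have hgr : ∀ x : EuclideanSpace ℝ (Fin N),
          ‖gradient (fun y => t0 * ψ y) x‖ ^ 2 = t0 ^ 2 * ‖gradient ψ x‖ ^ 2 := fun x => by
        rw [gradient_const_mul ((hψsm.differentiable hdifftop) x) t0, norm_smul,
          Real.norm_eq_abs, abs_of_pos ht0pos, mul_pow]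
      simp_rw [hgr]
      rw [integral_const_mul]
    have e2 : (∫ x in Ω, (t0 * ψ x) ^ q) = t0 ^ q * ∫ x in Ω, ψ x ^ q := by
      have hmr : ∀ x : EuclideanSpace ℝ (Fin N), (t0 * ψ x) ^ q = t0 ^ q * ψ x ^ q :=
        fun x => Real.mul_rpow ht0pos.le (hψ0 x)
      simp_rw [hmr]
      rw [integral_const_mul]
    rw [e1, e2]
    have hALam : (∫ x in Ω, ‖gradient ψ x‖ ^ 2) ≤ lam + ε₁ := le_trans hAψle hAlt.le
    have hb1 : (1/2) * (t0 ^ 2 * ∫ x in Ω, ‖gradient ψ x‖ ^ 2)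
        ≤ (1/2) * (t0 ^ 2 * (lam + ε₁)) := by
      apply mul_le_mul_of_nonneg_left (mul_le_mul_of_nonneg_left hALam (by positivity))
      norm_num
    have hb2 : (1/q) * (t0 ^ q * (1 - ε₂)) ≤ (1/q) * (t0 ^ q * ∫ x in Ω, ψ x ^ q) := by
      apply mul_le_mul_of_nonneg_left (mul_le_mul_of_nonneg_left hBq.le ht0qpos.le)
      positivity
    have hfinal : (1/2) * (t0 ^ 2 * (lam + ε₁)) - (1/q) * (t0 ^ q * (1 - ε₂))
        = (q - 2) / (2 * q) * M + ε := by
      have ht02ne : (t0:ℝ) ^ 2 ≠ 0 := by positivity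
      have ht0qne : t0 ^ q ≠ 0 := ne_of_gt ht0qpos
      have hexp : (1/2) * (t0 ^ 2 * (lam + ε₁)) - (1/q) * (t0 ^ q * (1 - ε₂))
          = (1/2) * (t0 ^ 2 * lam) - (1/q) * (t0 ^ q) + ε := by
        rw [hε₁def, hε₂def]
        field_simp
        ring
      rw [hexp, ht02, ht0q]
      field_simp
    linarith
  have hTne : T.Nonempty := by
    obtain ⟨t, ht, -⟩ := upper 1 one_pos
    exact ⟨t, ht⟩
  apply le_antisymm
  · apply le_of_forall_pos_le_add
    intro ε hε
    obtain ⟨t, htT, hle⟩ := upper ε hε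
    exact le_trans (csInf_le ⟨(q - 2) / (2 * q) * M, lower⟩ htT) hle
  · exact le_csInf hTne lower
end

section
/- Let N ≥ 1, let 1 ≤ q < 2, let γ satisfy q ≤ γ < 2, let Ω ⊆ ℝ^N be an open set, and let w be a classical Lane–Emden solution on Ω such that ∫_Ω w^{(2−q)γ/(2−γ)} dx < ∞. Then for every smooth function φ : ℝ^N → ℝ with compact support contained in Ω one has ∫_Ω |φ|^γ dx ≤ (∫_Ω |∇φ|² dx)^{γ/2} · (∫_Ω w^{(2−q)γ/(2−γ)} dx)^{(2−γ)/2}. -/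
open MeasureTheory

open Set

private lemma cont_glue {X : Type*} [TopologicalSpace X] {f : X → ℝ} {Ω K : Set X}
    (hΩ : IsOpen Ω) (hf : ContinuousOn f Ω) (hKc : IsClosed K) (hKΩ : K ⊆ Ω)
    (h0 : ∀ x ∉ K, f x = 0) : Continuous f := by
  rw [continuous_iff_continuousAt]
  intro x
  by_cases hx : x ∈ Ω
  · exact hf.continuousAt (hΩ.mem_nhds hx)
  · have hxK : x ∉ K := fun h => hx (hKΩ h)
    have hev : f =ᶠ[nhds x] (fun _ => (0:ℝ)) :=
      Filter.eventuallyEq_of_mem (hKc.isOpen_compl.mem_nhds hxK) (fun y hy => h0 y hy)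
    exact continuousAt_const.congr hev.symm

private lemma integral_div_eq_zero_pi {n : ℕ}
    (F : Fin (n+1) → (Fin (n+1) → ℝ) → ℝ)
    (F' : Fin (n+1) → (Fin (n+1) → ℝ) → ((Fin (n+1) → ℝ) →L[ℝ] ℝ))
    (hd : ∀ i x, HasFDerivAt (F i) (F' i x) x)
    {K : Set (Fin (n+1) → ℝ)} (hK : IsCompact K)
    (hFK : ∀ i, ∀ x ∉ K, F i x = 0)
    {D : (Fin (n+1) → ℝ) → ℝ} (hDc : Continuous D)
    (hDK : ∀ x ∉ K, D x = 0)
    (hD : ∀ x, D x = ∑ i, F' i x (Pi.single i 1)) :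
    ∫ x, D x = 0 := by
  obtain ⟨R, hR⟩ := hK.isBounded.subset_closedBall 0
  set R' : ℝ := max R 0 + 1 with hR'
  have hRR' : R < R' := by
    have := le_max_left R 0
    simp only [hR']; linarith
  have hR'0 : 0 < R' := by
    have := le_max_right R 0
    simp only [hR']; linarith
  set a : Fin (n+1) → ℝ := fun _ => -R' with ha
  set b : Fin (n+1) → ℝ := fun _ => R' with hb
  have hle : a ≤ b := fun i => by simp [ha, hb]; linarith
  have hnorm : ∀ x ∈ K, ‖x‖ ≤ R := by
    intro x hx
    have := hR hx
    simpa [Metric.mem_closedBall, dist_zero_right] using this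
  have hsub : K ⊆ Icc a b := by
    intro x hx
    have h1 := hnorm x hx
    constructor <;> intro i <;>
    · have := norm_le_pi_norm x i
      simp only [Real.norm_eq_abs] at this
      have := abs_le.mp (le_trans this h1)
      simp [ha, hb]; linarith [this.1, this.2]
  have hpt : ∀ (i : Fin (n+1)) (c : ℝ) (y : Fin n → ℝ), R < |c| → F i (i.insertNth c y) = 0 := by
    intro i c y hc
    apply hFK
    intro hmem
    set p : Fin (n+1) → ℝ := i.insertNth c y with hp
    have h1 : ‖p‖ ≤ R := hnorm _ hmem
    have h2 : |c| ≤ ‖p‖ := by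
      have := norm_le_pi_norm p i
      simpa [hp, Fin.insertNth_apply_same, Real.norm_eq_abs] using this
    linarith
  have hfun : (fun x => ∑ i, F' i x (Pi.single i 1)) = D := funext fun x => (hD x).symm
  have key := integral_divergence_of_hasFDerivAt_off_countable' a b hle F F' ∅
    Set.countable_empty
    (fun i => (continuous_iff_continuousAt.mpr
      (fun x => (hd i x).differentiableAt.continuousAt)).continuousOn)
    (fun x _ i => hd i x)
    (by rw [hfun]; exact hDc.continuousOn.integrableOn_compact isCompact_Icc)
  rw [hfun] at key
  calc ∫ x, D x = ∫ x in Icc a b, D x :=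
        (setIntegral_eq_integral_of_forall_compl_eq_zero
          (fun x hx => hDK x (fun hxK => hx (hsub hxK)))).symm
    _ = _ := key
    _ = 0 := by
        apply Finset.sum_eq_zero
        intro i _
        have h1 : (fun x : Fin n → ℝ => F i (i.insertNth (b i) x)) = fun _ => 0 :=
          funext fun y => hpt i (b i) y (by rw [hb]; rw [abs_of_pos hR'0]; exact hRR')
        have h2 : (fun x : Fin n → ℝ => F i (i.insertNth (a i) x)) = fun _ => 0 :=
          funext fun y => hpt i (a i) y (by rw [ha]; rw [abs_neg, abs_of_pos hR'0]; exact hRR')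
        rw [h1, h2]
        simp

private lemma integral_div_eq_zero_euc {n : ℕ}
    (G : Fin (n+1) → EuclideanSpace ℝ (Fin (n+1)) → ℝ)
    (G' : Fin (n+1) → EuclideanSpace ℝ (Fin (n+1)) → (EuclideanSpace ℝ (Fin (n+1)) →L[ℝ] ℝ))
    (hd : ∀ i x, HasFDerivAt (G i) (G' i x) x)
    {K : Set (EuclideanSpace ℝ (Fin (n+1)))} (hK : IsCompact K)
    (hGK : ∀ i, ∀ x ∉ K, G i x = 0)
    {D : EuclideanSpace ℝ (Fin (n+1)) → ℝ} (hDc : Continuous D)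
    (hDK : ∀ x ∉ K, D x = 0)
    (hD : ∀ x, D x = ∑ i, G' i x (EuclideanSpace.single i 1)) :
    ∫ x, D x = 0 := by
  set e := (MeasurableEquiv.toLp 2 (Fin (n+1) → ℝ)).symm with he
  set L := (EuclideanSpace.equiv (Fin (n+1)) ℝ) with hL
  have hcoe : (⇑e.symm : (Fin (n+1) → ℝ) → EuclideanSpace ℝ (Fin (n+1))) = ⇑L.symm := rfl
  have hmp : MeasurePreserving (⇑e.symm) volume volume :=
    (EuclideanSpace.volume_preserving_symm_measurableEquiv_toLp (Fin (n+1))).symm e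
  have htrans : ∫ y : Fin (n+1) → ℝ, D (L.symm y) = ∫ x, D x := by
    rw [← hcoe]
    exact hmp.integral_comp e.symm.measurableEmbedding D
  rw [← htrans]
  apply integral_div_eq_zero_pi (fun i y => G i (L.symm y))
    (fun i y => (G' i (L.symm y)).comp (L.symm : (Fin (n+1) → ℝ) →L[ℝ] EuclideanSpace ℝ (Fin (n+1))))
    (fun i y => (hd i (L.symm y)).comp y L.symm.hasFDerivAt)
    (hK.image L.symm.symm.continuous)
    (fun i x hx => hGK i (L.symm x) (fun hmem => hx ⟨L.symm x, hmem, by simp⟩))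
    (hDc.comp L.symm.continuous)
    (fun x hx => hDK (L.symm x) (fun hmem => hx ⟨L.symm x, hmem, by simp⟩))
    (fun x => by
      show D (L.symm x) = _
      rw [hD (L.symm x)]
      exact Finset.sum_congr rfl fun i _ => rfl)

set_option maxHeartbeats 1000000 in
/-- Integrability of the Lane–Emden density yields a Sobolev-type inequality. -/
theorem sobolev_from_density {N : ℕ} (hN : 1 ≤ N)
    {q γ : ℝ} (hq1 : 1 ≤ q) (hq2 : q < 2) (hγ1 : q ≤ γ) (hγ2 : γ < 2)
    {Ω : Set (EuclideanSpace ℝ (Fin N))} (hΩ : IsOpen Ω)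
    {w : EuclideanSpace ℝ (Fin N) → ℝ} (hw : IsLaneEmdenSolution q Ω w)
    (hint : IntegrableOn (fun x => w x ^ ((2 - q) * γ / (2 - γ))) Ω volume)
    (φ : EuclideanSpace ℝ (Fin N) → ℝ) (hφ : ContDiff ℝ (⊤ : ℕ∞) φ)
    (hφc : HasCompactSupport φ) (hφΩ : tsupport φ ⊆ Ω) :
    (∫ x in Ω, |φ x| ^ γ)
      ≤ (∫ x in Ω, ‖gradient φ x‖ ^ 2) ^ (γ / 2)
        * (∫ x in Ω, w x ^ ((2 - q) * γ / (2 - γ))) ^ ((2 - γ) / 2) := by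
  obtain ⟨n, rfl⟩ : ∃ n, N = n + 1 := ⟨N - 1, (Nat.succ_pred_eq_of_pos hN).symm⟩
  obtain ⟨hw2, hwpos, hweq⟩ := hw
  have hγ0 : (0:ℝ) < γ := by linarith
  have h2γ : (0:ℝ) < 2 - γ := by linarith
  set K := tsupport φ with hKdef
  have hKc : IsCompact K := hφc
  have hKcl : IsClosed K := isClosed_tsupport φ
  have hKΩ : K ⊆ Ω := hφΩ
  have hφ1 : ContDiff ℝ 1 φ := hφ.of_le (by exact_mod_cast le_top)
  have hφdiff : Differentiable ℝ φ := hφ1.differentiable one_ne_zero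
  have hφcont : Continuous φ := hφ1.continuous
  have hfφcont : Continuous (fderiv ℝ φ) := hφ1.continuous_fderiv one_ne_zero
  have hw1 : ContDiffOn ℝ 1 w Ω := hw2.of_le (by norm_num)
  have hfw : ContDiffOn ℝ 1 (fderiv ℝ w) Ω := hw2.fderiv_of_isOpen hΩ (by norm_num)
  have hne : ∀ x ∈ Ω, w x ≠ 0 := fun x hx => ne_of_gt (hwpos x hx)
  -- basic functions
  set u : EuclideanSpace ℝ (Fin (n+1)) → ℝ := fun y => (φ y * φ y) * (w y)⁻¹ with hu_def
  set Pw : Fin (n+1) → EuclideanSpace ℝ (Fin (n+1)) → ℝ :=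
    fun i y => fderiv ℝ w y (EuclideanSpace.single i 1) with hPw_def
  -- differentiability on Ω
  have hwd : ∀ x ∈ Ω, DifferentiableAt ℝ w x := fun x hx =>
    (hw2.contDiffAt (hΩ.mem_nhds hx)).differentiableAt (by norm_num)
  have hud : ∀ x ∈ Ω, DifferentiableAt ℝ u x := fun x hx =>
    ((hφdiff x).mul (hφdiff x)).mul ((hwd x hx).inv (hne x hx))
  have hPwd : ∀ i, ∀ x ∈ Ω, DifferentiableAt ℝ (Pw i) x := fun i x hx =>
    ((hfw.contDiffAt (hΩ.mem_nhds hx)).differentiableAt one_ne_zero).clm_apply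
      (differentiableAt_const _)
  have hu_cd : ContDiffOn ℝ 1 u Ω := ((hφ1.mul hφ1).contDiffOn).mul (hw1.inv hne)
  have hfu_cont : ContinuousOn (fderiv ℝ u) Ω :=
    hu_cd.continuousOn_fderiv_of_isOpen hΩ le_rfl
  have hPwcont : ∀ i, ContinuousOn (Pw i) Ω := fun i =>
    hfw.continuousOn.clm_apply continuousOn_const
  -- vanishing off K
  have hu0 : ∀ y ∉ K, u y = 0 := fun y hy => by
    simp [hu_def, image_eq_zero_of_notMem_tsupport hy]
  have hfu0 : ∀ y ∉ K, fderiv ℝ u y = 0 := by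
    intro y hy
    have hev : u =ᶠ[nhds y] (fun _ => (0:ℝ)) :=
      Filter.eventuallyEq_of_mem (hKcl.isOpen_compl.mem_nhds hy) (fun z hz => hu0 z hz)
    rw [hev.fderiv_eq]
    exact fderiv_const_apply 0
  have hfφ0 : ∀ y ∉ K, fderiv ℝ φ y = 0 := by
    intro y hy
    have hev : φ =ᶠ[nhds y] (fun _ => (0:ℝ)) :=
      Filter.eventuallyEq_of_mem (hKcl.isOpen_compl.mem_nhds hy)
        (fun z hz => image_eq_zero_of_notMem_tsupport hz)
    rw [hev.fderiv_eq]
    exact fderiv_const_apply 0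
  -- vector field and its derivative
  set V : Fin (n+1) → EuclideanSpace ℝ (Fin (n+1)) → ℝ :=
    fun i => Ω.indicator (fun y => u y * Pw i y) with hV_def
  set V' : Fin (n+1) → EuclideanSpace ℝ (Fin (n+1)) →
      (EuclideanSpace ℝ (Fin (n+1)) →L[ℝ] ℝ) :=
    fun i => Ω.indicator (fun y => fderiv ℝ (fun z => u z * Pw i z) y) with hV'_def
  set P : EuclideanSpace ℝ (Fin (n+1)) → ℝ :=
    Ω.indicator (fun y => (φ y * φ y) * w y ^ (q-2)) with hP_def
  set Q : EuclideanSpace ℝ (Fin (n+1)) → ℝ :=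
    Ω.indicator (fun y => ∑ i, Pw i y * (fderiv ℝ u y (EuclideanSpace.single i 1))) with hQ_def
  set G : EuclideanSpace ℝ (Fin (n+1)) → ℝ := fun x => ‖gradient φ x‖^2 with hG_def
  -- vanishing of V off K
  have hV0 : ∀ i, ∀ y ∉ K, V i y = 0 := by
    intro i y hy
    by_cases h : y ∈ Ω
    · simp only [hV_def]
      rw [Set.indicator_of_mem h, hu0 y hy]; ring
    · simp only [hV_def]
      exact Set.indicator_of_notMem h _
  -- HasFDerivAt for V
  have hVd : ∀ i x, HasFDerivAt (V i) (V' i x) x := by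
    intro i x
    by_cases hx : x ∈ Ω
    · have hdm : DifferentiableAt ℝ (fun z => u z * Pw i z) x := (hud x hx).mul (hPwd i x hx)
      have hev : V i =ᶠ[nhds x] (fun z => u z * Pw i z) :=
        Filter.eventuallyEq_of_mem (hΩ.mem_nhds hx) (fun z hz => Set.indicator_of_mem hz _)
      rw [show V' i x = fderiv ℝ (fun z => u z * Pw i z) x from Set.indicator_of_mem hx _]
      exact hdm.hasFDerivAt.congr_of_eventuallyEq hev
    · have hxK : x ∉ K := fun h => hx (hKΩ h)
      have hev : V i =ᶠ[nhds x] (fun _ => (0:ℝ)) :=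
        Filter.eventuallyEq_of_mem (hKcl.isOpen_compl.mem_nhds hxK)
          (fun z hz => hV0 i z hz)
      rw [show V' i x = 0 from Set.indicator_of_notMem hx _]
      exact (hasFDerivAt_const (0:ℝ) x).congr_of_eventuallyEq hev
  -- divergence identity
  have hDdiv : ∀ x, Q x - P x = ∑ i, V' i x (EuclideanSpace.single i 1) := by
    intro x
    by_cases hx : x ∈ Ω
    · have hw0 : 0 < w x := hwpos x hx
      have hrhs : ∀ i, V' i x (EuclideanSpace.single i 1)
          = u x * fderiv ℝ (Pw i) x (EuclideanSpace.single i 1)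
            + Pw i x * fderiv ℝ u x (EuclideanSpace.single i 1) := by
        intro i
        rw [show V' i x = fderiv ℝ (fun z => u z * Pw i z) x from Set.indicator_of_mem hx _]
        rw [fderiv_fun_mul (hud x hx) (hPwd i x hx)]
        simp
      have hlap : ∑ i, fderiv ℝ (Pw i) x (EuclideanSpace.single i 1) = lap w x := rfl
      have hlapx : lap w x = -(w x ^ (q-1)) := by
        have := hweq x hx; linarith
      have hpow : (w x)⁻¹ * w x ^ (q-1) = w x ^ (q-2) := by
        rw [← Real.rpow_neg_one (w x), ← Real.rpow_add hw0]
        congr 1; ring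
      calc Q x - P x
          = (∑ i, Pw i x * (fderiv ℝ u x (EuclideanSpace.single i 1)))
            - (φ x * φ x) * w x ^ (q-2) := by
            rw [hQ_def, hP_def, Set.indicator_of_mem hx, Set.indicator_of_mem hx]
        _ = u x * lap w x + ∑ i, Pw i x * (fderiv ℝ u x (EuclideanSpace.single i 1)) := by
            have h3 : u x = φ x * φ x * (w x)⁻¹ := rfl
            have h4 : u x * lap w x = -((φ x * φ x) * w x ^ (q-2)) := by
              rw [hlapx, ← hpow, h3]; ring
            rw [h4]; ring
        _ = u x * (∑ i, fderiv ℝ (Pw i) x (EuclideanSpace.single i 1))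
            + ∑ i, Pw i x * (fderiv ℝ u x (EuclideanSpace.single i 1)) := by rw [hlap]
        _ = ∑ i, (u x * fderiv ℝ (Pw i) x (EuclideanSpace.single i 1)
            + Pw i x * fderiv ℝ u x (EuclideanSpace.single i 1)) := by
            rw [Finset.sum_add_distrib, Finset.mul_sum]
        _ = ∑ i, V' i x (EuclideanSpace.single i 1) :=
            Finset.sum_congr rfl fun i _ => (hrhs i).symm
    · have h1 : Q x = 0 := Set.indicator_of_notMem hx _
      have h2 : P x = 0 := Set.indicator_of_notMem hx _
      have h3 : ∀ i, V' i x = 0 := fun i => Set.indicator_of_notMem hx _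
      rw [h1, h2]
      have h5 : ∀ i : Fin (n+1), V' i x (EuclideanSpace.single i 1) = 0 := fun i => by
        rw [h3 i]; rfl
      rw [Finset.sum_congr rfl (fun i _ => h5 i)]
      simp
  -- vanishing of P, Q off K
  have hP0 : ∀ y ∉ K, P y = 0 := by
    intro y hy
    by_cases h : y ∈ Ω
    · rw [hP_def, Set.indicator_of_mem h, image_eq_zero_of_notMem_tsupport hy]; ring
    · exact Set.indicator_of_notMem h _
  have hQ0 : ∀ y ∉ K, Q y = 0 := by
    intro y hy
    by_cases h : y ∈ Ω
    · rw [hQ_def, Set.indicator_of_mem h]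
      apply Finset.sum_eq_zero
      intro i _
      rw [hfu0 y hy]
      simp
    · exact Set.indicator_of_notMem h _
  have hG0 : ∀ y ∉ K, G y = 0 := by
    intro y hy
    rw [hG_def]
    show ‖gradient φ y‖^2 = 0
    have : gradient φ y = 0 := by
      show (InnerProductSpace.toDual ℝ _).symm (fderiv ℝ φ y) = 0
      rw [hfφ0 y hy]; simp
    rw [this]; simp
  -- continuity
  have hucont : ContinuousOn u Ω :=
    ((hφcont.mul hφcont).continuousOn).mul (hw1.continuousOn.inv₀ hne)
  have hPcont : Continuous P := by
    apply cont_glue hΩ _ hKcl hKΩ hP0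
    apply ContinuousOn.congr _ (fun y hy => Set.indicator_of_mem hy _)
    exact ((hφcont.mul hφcont).continuousOn).mul
      (hw1.continuousOn.rpow_const (fun x hx => Or.inl (hne x hx)))
  have hQcont : Continuous Q := by
    apply cont_glue hΩ _ hKcl hKΩ hQ0
    apply ContinuousOn.congr _ (fun y hy => Set.indicator_of_mem hy _)
    apply continuousOn_finset_sum
    intro i _
    exact (hPwcont i).mul (hfu_cont.clm_apply continuousOn_const)
  have hGcont : Continuous G := by
    have h1 : Continuous (gradient φ) := by
      show Continuous (fun x => (InnerProductSpace.toDual ℝ _).symm (fderiv ℝ φ x))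
      exact (InnerProductSpace.toDual ℝ _).symm.continuous.comp hfφcont
    exact (h1.norm).pow 2
  -- integrability
  have hPint : Integrable P := hPcont.integrable_of_hasCompactSupport
    (HasCompactSupport.intro hKc hP0)
  have hQint : Integrable Q := hQcont.integrable_of_hasCompactSupport
    (HasCompactSupport.intro hKc hQ0)
  have hGint : Integrable G := hGcont.integrable_of_hasCompactSupport
    (HasCompactSupport.intro hKc hG0)
  -- divergence theorem
  have hdiv : ∫ x, (Q x - P x) = 0 := by
    have hDc : Continuous (fun x => Q x - P x) := hQcont.sub hPcont
    have hDK : ∀ x ∉ K, Q x - P x = 0 := fun x hx => by rw [hP0 x hx, hQ0 x hx]; ring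
    exact integral_div_eq_zero_euc V V' hVd hKc hV0 hDc hDK hDdiv
  have hQP : ∫ x, Q x = ∫ x, P x := by
    rw [integral_sub hQint hPint] at hdiv
    linarith
  -- pointwise bound Q ≤ G
  have hGsum : ∀ x, G x = ∑ i, (fderiv ℝ φ x (EuclideanSpace.single i 1))^2 := by
    intro x
    have h1 : ∀ i, gradient φ x i = fderiv ℝ φ x (EuclideanSpace.single i 1) := by
      intro i
      have h2 : (inner ℝ (gradient φ x) (EuclideanSpace.single i 1) : ℝ)
          = fderiv ℝ φ x (EuclideanSpace.single i 1) :=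
        InnerProductSpace.toDual_symm_apply
      rw [EuclideanSpace.inner_single_right] at h2
      simpa using h2
    rw [hG_def]
    show ‖gradient φ x‖^2 = _
    rw [EuclideanSpace.norm_eq, Real.sq_sqrt (by positivity)]
    exact Finset.sum_congr rfl fun i _ => by rw [Real.norm_eq_abs, sq_abs, h1 i]
  have hQle : ∀ x, Q x ≤ G x := by
    intro x
    by_cases hx : x ∈ Ω
    · rw [hQ_def, Set.indicator_of_mem hx, hGsum x]
      apply Finset.sum_le_sum
      intro i _
      have hw0 : 0 < w x := hwpos x hx
      -- compute fderiv u x explicitly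
      have hiv : HasFDerivAt (fun y => (w y)⁻¹)
          ((-(ContinuousLinearMap.mulLeftRight ℝ ℝ (w x)⁻¹ (w x)⁻¹)).comp (fderiv ℝ w x)) x := by
        have h1 := (hasFDerivAt_inv' (𝕜 := ℝ) (R := ℝ) (hne x hx)).comp x
          (hwd x hx).hasFDerivAt
        exact h1
      have hmm : HasFDerivAt (fun y => φ y * φ y)
          (φ x • fderiv ℝ φ x + φ x • fderiv ℝ φ x) x :=
        (hφdiff x).hasFDerivAt.mul (hφdiff x).hasFDerivAt
      have hu' : HasFDerivAt u
          ((φ x * φ x) • ((-(ContinuousLinearMap.mulLeftRight ℝ ℝ (w x)⁻¹ (w x)⁻¹)).comp (fderiv ℝ w x))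
            + (w x)⁻¹ • (φ x • fderiv ℝ φ x + φ x • fderiv ℝ φ x)) x := hmm.mul hiv
      have hfu_eq := hu'.fderiv
      rw [hfu_eq]
      set a : ℝ := fderiv ℝ φ x (EuclideanSpace.single i 1) with hadef
      set c : ℝ := fderiv ℝ w x (EuclideanSpace.single i 1) with hcdef
      have hPwi : Pw i x = c := rfl
      rw [hPwi]
      simp only [ContinuousLinearMap.add_apply, ContinuousLinearMap.smul_apply,
        ContinuousLinearMap.comp_apply, ContinuousLinearMap.neg_apply,
        ContinuousLinearMap.mulLeftRight_apply, smul_eq_mul, ← hadef, ← hcdef]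
      nlinarith [sq_nonneg (a - φ x * c * (w x)⁻¹), sq_nonneg a]
    · rw [hQ_def, Set.indicator_of_notMem hx, hG_def]
      positivity
  have hQG : ∫ x, Q x ≤ ∫ x, G x := integral_mono hQint hGint hQle
  -- the key inequality ∫_Ω φ² w^(q-2) ≤ ∫_Ω ‖∇φ‖²
  have hA_eq : ∫ x in Ω, (φ x * φ x) * w x ^ (q-2) = ∫ x, P x := by
    have h1 : Set.EqOn (fun x => (φ x * φ x) * w x ^ (q-2)) P Ω := fun x hx => by
      simp only [hP_def]
      rw [Set.indicator_of_mem hx]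
    rw [setIntegral_congr_fun hΩ.measurableSet h1]
    exact setIntegral_eq_integral_of_forall_compl_eq_zero
      (fun x hx => Set.indicator_of_notMem hx _)
  have hB_eq : ∫ x, G x = ∫ x in Ω, G x :=
    (setIntegral_eq_integral_of_forall_compl_eq_zero
      (fun x hx => hG0 x (fun hK' => hx (hKΩ hK')))).symm
  have keyAB : ∫ x in Ω, (φ x * φ x) * w x ^ (q-2) ≤ ∫ x in Ω, G x := by
    rw [hA_eq, ← hQP, ← hB_eq]
    exact hQG
  -- Hölder's inequality
  set μ := volume.restrict Ω with hμ_def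
  set p : ℝ := 2/γ with hp_def
  set p' : ℝ := 2/(2-γ) with hp'_def
  have hp0 : 0 < p := by positivity
  have hp'0 : 0 < p' := by positivity
  have hp1 : 1 < p := by
    rw [hp_def, lt_div_iff₀ hγ0]; linarith
  have hconj : Real.HolderConjugate p p' := by
    rw [Real.holderConjugate_iff]
    constructor
    · exact hp1
    · rw [hp_def, hp'_def, inv_div, inv_div]; linarith
  set f : EuclideanSpace ℝ (Fin (n+1)) → ℝ :=
    fun x => |φ x| ^ γ * w x ^ ((q - 2) * γ / 2) with hf_def
  set g : EuclideanSpace ℝ (Fin (n+1)) → ℝ :=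
    fun x => w x ^ ((2 - q) * γ / 2) with hg_def
  have hae : ∀ᵐ x ∂μ, x ∈ Ω := ae_restrict_of_forall_mem hΩ.measurableSet (fun x hx => hx)
  have hfmeas : AEStronglyMeasurable f μ := by
    apply ContinuousOn.aestronglyMeasurable _ hΩ.measurableSet
    exact ((hφcont.abs.continuousOn).rpow_const (fun x _ => Or.inr hγ0.le)).mul
      (hw1.continuousOn.rpow_const (fun x hx => Or.inl (hne x hx)))
  have hgmeas : AEStronglyMeasurable g μ := by
    apply ContinuousOn.aestronglyMeasurable _ hΩ.measurableSet
    exact hw1.continuousOn.rpow_const (fun x hx => Or.inl (hne x hx))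
  have hf_nonneg : 0 ≤ᵐ[μ] f := by
    filter_upwards [hae] with x hx
    exact mul_nonneg (Real.rpow_nonneg (abs_nonneg _) _)
      (Real.rpow_nonneg (hwpos x hx).le _)
  have hg_nonneg : 0 ≤ᵐ[μ] g := by
    filter_upwards [hae] with x hx
    exact Real.rpow_nonneg (hwpos x hx).le _
  have hpne0 : ENNReal.ofReal p ≠ 0 := by
    simp [ENNReal.ofReal_eq_zero, not_le, hp0]
  have hp'ne0 : ENNReal.ofReal p' ≠ 0 := by
    simp [ENNReal.ofReal_eq_zero, not_le, hp'0]
  have hfp : ∀ᵐ x ∂μ, ‖f x‖ ^ p = (φ x * φ x) * w x ^ (q-2) := by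
    filter_upwards [hae] with x hx
    have hw0 : 0 < w x := hwpos x hx
    have h3 : f x = |φ x| ^ γ * w x ^ ((q - 2) * γ / 2) := by simp only [hf_def]
    rw [h3, Real.norm_of_nonneg (mul_nonneg (Real.rpow_nonneg (abs_nonneg _) _)
      (Real.rpow_nonneg hw0.le _))]
    rw [Real.mul_rpow (Real.rpow_nonneg (abs_nonneg _) _) (Real.rpow_nonneg hw0.le _),
      ← Real.rpow_mul (abs_nonneg _), ← Real.rpow_mul hw0.le]
    have e1 : γ * p = 2 := by rw [hp_def]; field_simp
    have e2 : (q-2)*γ/2 * p = q - 2 := by rw [hp_def]; field_simp; try ring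
    rw [e1, e2, show (2:ℝ) = ((2:ℕ):ℝ) by norm_num, Real.rpow_natCast, sq_abs, sq]
  have hgp : ∀ᵐ x ∂μ, ‖g x‖ ^ p' = w x ^ ((2 - q) * γ / (2 - γ)) := by
    filter_upwards [hae] with x hx
    have hw0 : 0 < w x := hwpos x hx
    have h3 : g x = w x ^ ((2 - q) * γ / 2) := by simp only [hg_def]
    rw [h3, Real.norm_of_nonneg (Real.rpow_nonneg hw0.le _), ← Real.rpow_mul hw0.le]
    congr 1
    rw [hp'_def]
    field_simp
    try ring
  have hfmem : MemLp f (ENNReal.ofReal p) μ := by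
    rw [← memLp_norm_rpow_iff hfmeas hpne0 ENNReal.ofReal_ne_top,
      ENNReal.div_self hpne0 ENNReal.ofReal_ne_top, ENNReal.toReal_ofReal hp0.le,
      memLp_one_iff_integrable]
    have h1 : IntegrableOn P Ω volume := hPint.integrableOn
    apply h1.congr
    filter_upwards [hae, hfp] with x hx hx2
    rw [hx2]
    simp only [hP_def]
    rw [Set.indicator_of_mem hx]
  have hgmem : MemLp g (ENNReal.ofReal p') μ := by
    rw [← memLp_norm_rpow_iff hgmeas hp'ne0 ENNReal.ofReal_ne_top,
      ENNReal.div_self hp'ne0 ENNReal.ofReal_ne_top, ENNReal.toReal_ofReal hp'0.le,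
      memLp_one_iff_integrable]
    apply hint.congr
    filter_upwards [hgp] with x hx2
    rw [hx2]
  have hHolder := integral_mul_le_Lp_mul_Lq_of_nonneg hconj hf_nonneg hg_nonneg hfmem hgmem
  have hL : ∫ a, f a * g a ∂μ = ∫ x in Ω, |φ x| ^ γ := by
    apply setIntegral_congr_fun hΩ.measurableSet
    intro x hx
    have hw0 : 0 < w x := hwpos x hx
    simp only [hf_def, hg_def]
    rw [mul_assoc, ← Real.rpow_add hw0,
      show (q-2)*γ/2 + (2-q)*γ/2 = 0 by ring, Real.rpow_zero, mul_one]
  have hR1 : ∫ a, f a ^ p ∂μ = ∫ x in Ω, (φ x * φ x) * w x ^ (q-2) := by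
    apply integral_congr_ae
    filter_upwards [hae, hfp] with x hx hx2
    rw [← hx2, Real.norm_of_nonneg]
    exact mul_nonneg (Real.rpow_nonneg (abs_nonneg _) _) (Real.rpow_nonneg (hwpos x hx).le _)
  have hR2 : ∫ a, g a ^ p' ∂μ = ∫ x in Ω, w x ^ ((2 - q) * γ / (2 - γ)) := by
    apply integral_congr_ae
    filter_upwards [hae, hgp] with x hx hx2
    rw [← hx2, Real.norm_of_nonneg (Real.rpow_nonneg (hwpos x hx).le _)]
  have h1p : 1/p = γ/2 := by rw [hp_def, one_div_div]
  have h1p' : 1/p' = (2-γ)/2 := by rw [hp'_def, one_div_div]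
  have hA0 : 0 ≤ ∫ x in Ω, (φ x * φ x) * w x ^ (q-2) :=
    setIntegral_nonneg hΩ.measurableSet (fun x hx =>
      mul_nonneg (mul_self_nonneg _) (Real.rpow_nonneg (hwpos x hx).le _))
  have hC0 : 0 ≤ ∫ x in Ω, w x ^ ((2 - q) * γ / (2 - γ)) :=
    setIntegral_nonneg hΩ.measurableSet (fun x hx => Real.rpow_nonneg (hwpos x hx).le _)
  calc (∫ x in Ω, |φ x| ^ γ) = ∫ a, f a * g a ∂μ := hL.symm
    _ ≤ (∫ a, f a ^ p ∂μ) ^ (1/p) * (∫ a, g a ^ p' ∂μ) ^ (1/p') := hHolder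
    _ = (∫ x in Ω, (φ x * φ x) * w x ^ (q-2)) ^ (γ/2)
        * (∫ x in Ω, w x ^ ((2 - q) * γ / (2 - γ))) ^ ((2-γ)/2) := by
        rw [hR1, hR2, h1p, h1p']
    _ ≤ (∫ x in Ω, G x) ^ (γ/2)
        * (∫ x in Ω, w x ^ ((2 - q) * γ / (2 - γ))) ^ ((2-γ)/2) := by
        apply mul_le_mul_of_nonneg_right
        · exact Real.rpow_le_rpow hA0 keyAB (by positivity)
        · exact Real.rpow_nonneg hC0 _
end

section
/- Let N ≥ 1, let 1 ≤ q < 2, let Ω ⊆ ℝ^N be an open set and let w be a classical Lane–Emden solution on Ω with w(x) ≤ M for all x ∈ Ω, where M > 0. Let V : Ω → ℝ be measurable and satisfy −(1/4)·|∇w(x)/w(x)|² ≤ V(x) ≤ 0 for almost every x ∈ Ω. Then for every smooth function φ : ℝ^N → ℝ with compact support contained in Ω one has ∫_Ω |∇φ|² dx + ∫_Ω V φ² dx ≥ (1/2)·M^{q−2}·∫_Ω φ² dx. -/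
open MeasureTheory

lemma GSLB.hasFDerivAt_sq_div {E : Type*} [NormedAddCommGroup E] [NormedSpace ℝ E]
    {φ w : E → ℝ} {x : E}
    (hφ : DifferentiableAt ℝ φ x) (hw : DifferentiableAt ℝ w x) (hwx : w x ≠ 0) :
    HasFDerivAt (fun y => φ y ^ 2 / (2 * w y))
      ((φ x / w x) • fderiv ℝ φ x - (φ x ^ 2 / (2 * w x ^ 2)) • fderiv ℝ w x) x := by
  have h2wx : (2 : ℝ) * w x ≠ 0 := by simp [hwx]
  have h1 : HasFDerivAt (fun y => φ y ^ 2) ((2 * φ x) • fderiv ℝ φ x) x := by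
    have h := hφ.hasFDerivAt.fun_mul hφ.hasFDerivAt
    have e : (fun y => φ y ^ 2) = fun y => φ y * φ y := by funext y; ring
    rw [e]
    refine h.congr_fderiv ?_
    ext v; simp; ring
  have h2 : HasFDerivAt (fun y => 2 * w y) ((2 : ℝ) • fderiv ℝ w x) x :=
    hw.hasFDerivAt.const_mul 2
  have h3 : HasFDerivAt (fun y => (2 * w y)⁻¹)
      ((-ContinuousLinearMap.mulLeftRight ℝ ℝ (2 * w x)⁻¹ (2 * w x)⁻¹).comp
        ((2 : ℝ) • fderiv ℝ w x)) x :=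
    (hasFDerivAt_inv' h2wx).comp x h2
  have h4 := h1.fun_mul h3
  have e2 : (fun y => φ y ^ 2 / (2 * w y)) = fun y => φ y ^ 2 * (2 * w y)⁻¹ := by
    funext y; rw [div_eq_mul_inv]
  rw [e2]
  refine h4.congr_fderiv ?_
  ext v
  simp [ContinuousLinearMap.mulLeftRight_apply]
  field_simp
  ring

lemma GSLB.norm_sq_eq_sum_fin {N : ℕ} (v : EuclideanSpace ℝ (Fin N)) :
    ‖v‖ ^ 2 = ∑ i, (v i) ^ 2 := by
  rw [EuclideanSpace.norm_sq_eq]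
  simp

lemma GSLB.gradient_apply_fin {N : ℕ} (f : EuclideanSpace ℝ (Fin N) → ℝ)
    (x : EuclideanSpace ℝ (Fin N)) (i : Fin N) :
    gradient f x i = fderiv ℝ f x (EuclideanSpace.single i 1) := by
  have h1 : gradient f x i = @inner ℝ _ _ (gradient f x) (EuclideanSpace.single i 1) := by
    rw [EuclideanSpace.inner_single_right]; simp
  rw [h1]
  simp [gradient, InnerProductSpace.toDual_symm_apply]

lemma GSLB.pointwise_identity {N : ℕ} {Ω : Set (EuclideanSpace ℝ (Fin N))} (hΩ : IsOpen Ω)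
    {w φ : EuclideanSpace ℝ (Fin N) → ℝ} (hw : ContDiffOn ℝ 2 w Ω)
    (hwpos : ∀ x ∈ Ω, 0 < w x) (hφ : ContDiff ℝ (⊤ : ℕ∞) φ)
    {x : EuclideanSpace ℝ (Fin N)} (hx : x ∈ Ω) {q : ℝ} (hlap : -lap w x = w x ^ (q - 1)) :
    ‖gradient φ x‖ ^ 2 - (1 / 4) * (‖gradient w x‖ / w x) ^ 2 * φ x ^ 2
        - (1 / 2) * w x ^ (q - 2) * φ x ^ 2
      = ‖gradient φ x - (φ x / (2 * w x)) • gradient w x‖ ^ 2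
        + ∑ i, fderiv ℝ
            (fun y => φ y ^ 2 / (2 * w y) * fderiv ℝ w y (EuclideanSpace.single i 1)) x
            (EuclideanSpace.single i 1) := by
  have hmem : Ω ∈ nhds x := hΩ.mem_nhds hx
  have hwx : 0 < w x := hwpos x hx
  have hφd : DifferentiableAt ℝ φ x := (hφ.differentiable (by simp)) x
  have hwd : DifferentiableAt ℝ w x :=
    ((hw.differentiableOn (by norm_num)) x hx).differentiableAt hmem
  have hw' : DifferentiableOn ℝ (fun y => fderiv ℝ w y) Ω :=
    (hw.fderiv_of_isOpen (m := 1) hΩ (by norm_num)).differentiableOn (by norm_num)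
  have hw'x : DifferentiableAt ℝ (fun y => fderiv ℝ w y) x :=
    (hw' x hx).differentiableAt hmem
  have hgd := GSLB.hasFDerivAt_sq_div hφd hwd hwx.ne'
  set G := (φ x / w x) • fderiv ℝ φ x - (φ x ^ 2 / (2 * w x ^ 2)) • fderiv ℝ w x with hG
  have hgd' : DifferentiableAt ℝ (fun y => φ y ^ 2 / (2 * w y)) x := hgd.differentiableAt
  have hgfd : fderiv ℝ (fun y => φ y ^ 2 / (2 * w y)) x = G := hgd.fderiv
  have hpdwd : ∀ i : Fin N,
      DifferentiableAt ℝ (fun y => fderiv ℝ w y (EuclideanSpace.single i 1)) x :=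
    fun i => hw'x.clm_apply (differentiableAt_const _)
  have hsummand : ∀ i : Fin N,
      fderiv ℝ (fun y => φ y ^ 2 / (2 * w y) * fderiv ℝ w y (EuclideanSpace.single i 1)) x
          (EuclideanSpace.single i 1)
        = ((φ x / w x) * fderiv ℝ φ x (EuclideanSpace.single i 1)
            - (φ x ^ 2 / (2 * w x ^ 2)) * fderiv ℝ w x (EuclideanSpace.single i 1))
              * fderiv ℝ w x (EuclideanSpace.single i 1)
          + (φ x ^ 2 / (2 * w x)) *
              fderiv ℝ (fun y => fderiv ℝ w y (EuclideanSpace.single i 1)) x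
                (EuclideanSpace.single i 1) := by
    intro i
    rw [fderiv_fun_mul hgd' (hpdwd i)]
    simp [hgfd, hG]
    ring
  rw [Finset.sum_congr rfl (fun i _ => hsummand i)]
  have hφsum := GSLB.norm_sq_eq_sum_fin (gradient φ x)
  have hwsum := GSLB.norm_sq_eq_sum_fin (gradient w x)
  have hdiffsum := GSLB.norm_sq_eq_sum_fin (gradient φ x - (φ x / (2 * w x)) • gradient w x)
  simp only [PiLp.sub_apply, PiLp.smul_apply, smul_eq_mul, GSLB.gradient_apply_fin]
    at hφsum hwsum hdiffsum
  have hlapsum : ∑ i : Fin N, fderiv ℝ (fun y => fderiv ℝ w y (EuclideanSpace.single i 1)) x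
      (EuclideanSpace.single i 1) = -(w x ^ (q - 2) * w x) := by
    have h1 : w x ^ (q - 1) = w x ^ (q - 2) * w x := by
      rw [show q - 1 = q - 2 + 1 by ring, Real.rpow_add_one hwx.ne']
    have h2 : lap w x = -(w x ^ (q - 1)) := by linarith [hlap]
    rw [← h1, ← h2]; rfl
  rw [div_pow, hφsum, hwsum, hdiffsum]
  rw [Finset.sum_add_distrib, ← Finset.mul_sum, hlapsum]
  have expand : ∀ i : Fin N,
      (fderiv ℝ φ x (EuclideanSpace.single i 1)
          - φ x / (2 * w x) * fderiv ℝ w x (EuclideanSpace.single i 1)) ^ 2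
        = fderiv ℝ φ x (EuclideanSpace.single i 1) ^ 2
          - (φ x / w x) * (fderiv ℝ φ x (EuclideanSpace.single i 1)
              * fderiv ℝ w x (EuclideanSpace.single i 1))
          + (φ x ^ 2 / (4 * w x ^ 2)) * fderiv ℝ w x (EuclideanSpace.single i 1) ^ 2 := by
    intro i
    field_simp
    ring
  have expand2 : ∀ i : Fin N,
      ((φ x / w x) * fderiv ℝ φ x (EuclideanSpace.single i 1)
            - (φ x ^ 2 / (2 * w x ^ 2)) * fderiv ℝ w x (EuclideanSpace.single i 1))
              * fderiv ℝ w x (EuclideanSpace.single i 1)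
        = (φ x / w x) * (fderiv ℝ φ x (EuclideanSpace.single i 1)
              * fderiv ℝ w x (EuclideanSpace.single i 1))
          - (φ x ^ 2 / (2 * w x ^ 2)) * fderiv ℝ w x (EuclideanSpace.single i 1) ^ 2 := by
    intro i; ring
  rw [Finset.sum_congr rfl (fun i _ => expand i), Finset.sum_congr rfl (fun i _ => expand2 i)]
  simp only [Finset.sum_add_distrib, Finset.sum_sub_distrib, ← Finset.mul_sum]
  field_simp
  ring

/-- Integral of a directional derivative of a compactly supported differentiable
function vanishes. -/
lemma GSLB.integral_fderiv_eq_zero {N : ℕ} {h : EuclideanSpace ℝ (Fin N) → ℝ}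
    (hd : Differentiable ℝ h) (hi : Integrable h volume)
    (v : EuclideanSpace ℝ (Fin N))
    (hi' : Integrable (fun x => fderiv ℝ h x v) volume) :
    ∫ x, fderiv ℝ h x v = 0 := by
  have := integral_mul_fderiv_eq_neg_fderiv_mul_of_integrable (μ := volume)
    (f := fun _ => (1 : ℝ)) (g := h) (v := v) ?_ ?_ ?_ (fun x _ => differentiableAt_const 1) (fun x _ => hd x)
  · simpa using this
  · simp
  · simpa using hi'
  · simpa using hi

/-- A function continuous on an open set `Ω` and vanishing outside a compact
subset `K ⊆ Ω` is integrable on `Ω`. -/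
lemma GSLB.integrableOn_of_zero_off_compact {N : ℕ} {f : EuclideanSpace ℝ (Fin N) → ℝ}
    {Ω K : Set (EuclideanSpace ℝ (Fin N))} (hΩ : IsOpen Ω) (hK : IsCompact K)
    (hKc : IsClosed K) (hKΩ : K ⊆ Ω)
    (hf : ContinuousOn f Ω) (h0 : ∀ x ∉ K, f x = 0) : IntegrableOn f Ω volume := by
  have h1 : IntegrableOn f K volume := (hf.mono hKΩ).integrableOn_compact hK
  have h2 : IntegrableOn f (Ω \ K) volume := by
    refine (integrableOn_zero (μ := volume)).congr_fun (fun x hx => (h0 x hx.2).symm)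
      (hΩ.measurableSet.diff hKc.measurableSet)
  exact (h1.union h2).mono_set (fun x hx => by
    by_cases hxK : x ∈ K
    · exact Or.inl hxK
    · exact Or.inr ⟨hx, hxK⟩)

set_option maxHeartbeats 1000000 in
/-- **Lower bound for the ground state energy** of the Schrödinger operator `-Δ + V`
when `0 ≥ V ≥ -(1/4)|∇w/w|²` for a bounded Lane–Emden solution `w ≤ M`. -/
theorem ground_state_lower_bound {N : ℕ} (hN : 1 ≤ N)
    {q : ℝ} (hq1 : 1 ≤ q) (hq2 : q < 2)
    {Ω : Set (EuclideanSpace ℝ (Fin N))} (hΩ : IsOpen Ω)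
    {w : EuclideanSpace ℝ (Fin N) → ℝ} (hw : IsLaneEmdenSolution q Ω w)
    {M : ℝ} (hM : 0 < M) (hwM : ∀ x ∈ Ω, w x ≤ M)
    {V : EuclideanSpace ℝ (Fin N) → ℝ} (hVmeas : Measurable V)
    (hV : ∀ᵐ x ∂(volume.restrict Ω),
      -(1 / 4) * (‖gradient w x‖ / w x) ^ 2 ≤ V x ∧ V x ≤ 0)
    (φ : EuclideanSpace ℝ (Fin N) → ℝ) (hφ : ContDiff ℝ (⊤ : ℕ∞) φ)
    (hφc : HasCompactSupport φ) (hφΩ : tsupport φ ⊆ Ω) :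
    (1 / 2) * M ^ (q - 2) * (∫ x in Ω, (φ x) ^ 2)
      ≤ (∫ x in Ω, ‖gradient φ x‖ ^ 2) + ∫ x in Ω, V x * (φ x) ^ 2 := by
  obtain ⟨hwC2, hwpos, hwlap⟩ := hw
  set K := tsupport φ with hKdef
  have hK : IsCompact K := hφc
  have hKc : IsClosed K := isClosed_tsupport φ
  have φz : ∀ x ∉ K, φ x = 0 := fun x hx => image_eq_zero_of_notMem_tsupport hx
  have hφcont : Continuous φ := hφ.continuous
  have hφdiff : Differentiable ℝ φ := hφ.differentiable (by simp)
  have hgradφcont : Continuous (gradient φ) := by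
    have h := hφ.continuous_fderiv (by simp)
    exact (InnerProductSpace.toDual ℝ _).symm.continuous.comp h
  have gφz : ∀ x ∉ K, gradient φ x = 0 := by
    intro x hx
    have : fderiv ℝ φ x = 0 := by
      have := support_fderiv_subset (𝕜 := ℝ) (f := φ)
      by_contra h
      exact hx (this (Function.mem_support.mpr h))
    simp [gradient, this]
  -- continuity on Ω of various auxiliary functions
  have hwcont : ContinuousOn w Ω := hwC2.continuousOn
  have hwfcont : ContinuousOn (fun y => fderiv ℝ w y) Ω :=
    hwC2.continuousOn_fderiv_of_isOpen hΩ (by norm_num)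
  have hgradwcont : ContinuousOn (gradient w) Ω :=
    ((InnerProductSpace.toDual ℝ _).symm.continuous.comp_continuousOn hwfcont)
  -- the vector field components
  set h : Fin N → EuclideanSpace ℝ (Fin N) → ℝ :=
    fun i y => φ y ^ 2 / (2 * w y) * fderiv ℝ w y (EuclideanSpace.single i 1) with hhdef
  have hz : ∀ i, ∀ x ∉ K, h i x = 0 := by
    intro i x hx; simp [hhdef, φz x hx]
  have hev : ∀ i, ∀ x ∉ K, h i =ᶠ[nhds x] (fun _ => (0 : ℝ)) := by
    intro i x hx
    filter_upwards [hKc.isOpen_compl.mem_nhds hx] with y hy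
    exact hz i y hy
  -- differentiability of h i everywhere
  have hdiffh : ∀ i, Differentiable ℝ (h i) := by
    intro i x
    by_cases hx : x ∈ Ω
    · have hmem : Ω ∈ nhds x := hΩ.mem_nhds hx
      have hwd : DifferentiableAt ℝ w x :=
        ((hwC2.differentiableOn (by norm_num)) x hx).differentiableAt hmem
      have hgd := (GSLB.hasFDerivAt_sq_div (hφdiff x) hwd (hwpos x hx).ne').differentiableAt
      have hw'x : DifferentiableAt ℝ (fun y => fderiv ℝ w y) x :=
        (((hwC2.fderiv_of_isOpen (m := 1) hΩ (by norm_num)).differentiableOn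
          (by norm_num)) x hx).differentiableAt hmem
      exact hgd.mul (hw'x.clm_apply (differentiableAt_const _))
    · have hxK : x ∉ K := fun hxK => hx (hφΩ hxK)
      exact (Filter.EventuallyEq.differentiableAt_iff (hev i x hxK)).mpr
        (differentiableAt_const 0)
  have hfz : ∀ i, ∀ x ∉ K, fderiv ℝ (h i) x = 0 := by
    intro i x hx
    rw [(hev i x hx).fderiv_eq]
    exact fderiv_const_apply 0
  -- C¹ regularity of h i on Ω
  have hC1 : ∀ i, ContDiffOn ℝ 1 (h i) Ω := by
    intro i
    have hφ1 : ContDiffOn ℝ 1 φ Ω := (hφ.of_le (mod_cast le_top)).contDiffOn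
    have hw1 : ContDiffOn ℝ 1 w Ω := hwC2.of_le (by norm_num)
    have hnum : ContDiffOn ℝ 1 (fun y => φ y ^ 2) Ω := hφ1.pow 2
    have hden : ContDiffOn ℝ 1 (fun y => 2 * w y) Ω := contDiffOn_const.mul hw1
    have hgC1 : ContDiffOn ℝ 1 (fun y => φ y ^ 2 / (2 * w y)) Ω :=
      hnum.div hden (fun x hx => by have := hwpos x hx; positivity)
    have happ : ContDiffOn ℝ 1
        (fun y => fderiv ℝ w y (EuclideanSpace.single i 1)) Ω :=
      (hwC2.fderiv_of_isOpen (m := 1) hΩ (by norm_num)).clm_apply contDiffOn_const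
    exact hgC1.mul happ
  -- continuity of directional derivatives of h i
  have hHcont : ∀ i, Continuous (fun x => fderiv ℝ (h i) x (EuclideanSpace.single i 1)) := by
    intro i
    rw [continuous_iff_continuousAt]
    intro x
    by_cases hx : x ∈ Ω
    · have hfc : ContinuousOn (fderiv ℝ (h i)) Ω :=
        (hC1 i).continuousOn_fderiv_of_isOpen hΩ le_rfl
      have h1 : ContinuousAt (fderiv ℝ (h i)) x := hfc.continuousAt (hΩ.mem_nhds hx)
      exact ((ContinuousLinearMap.apply ℝ ℝ
        (EuclideanSpace.single i (1 : ℝ))).continuous.continuousAt).comp h1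
    · have hxK : x ∉ K := fun hxK => hx (hφΩ hxK)
      have hev' : (fun x => fderiv ℝ (h i) x (EuclideanSpace.single i 1))
          =ᶠ[nhds x] (fun _ => (0 : ℝ)) := by
        filter_upwards [hKc.isOpen_compl.mem_nhds hxK] with y hy
        rw [hfz i y hy]; rfl
      exact (continuousAt_congr hev'.symm).mp continuousAt_const
  -- integrability of h i and its derivative
  have hHsupp : ∀ i, ∀ x ∉ K, fderiv ℝ (h i) x (EuclideanSpace.single i 1) = 0 := by
    intro i x hx; rw [hfz i x hx]; rfl
  have hHint : ∀ i, Integrable (fun x => fderiv ℝ (h i) x (EuclideanSpace.single i 1))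
      volume := by
    intro i
    exact (hHcont i).integrable_of_hasCompactSupport
      (HasCompactSupport.intro hK (hHsupp i))
  have hhint : ∀ i, Integrable (h i) volume := by
    intro i
    exact ((hdiffh i).continuous).integrable_of_hasCompactSupport
      (HasCompactSupport.intro hK (hz i))
  -- the divergence integrates to zero
  set divh : EuclideanSpace ℝ (Fin N) → ℝ :=
    fun x => ∑ i, fderiv ℝ (h i) x (EuclideanSpace.single i 1) with hdivhdef
  have hdivhint : Integrable divh volume :=
    integrable_finset_sum _ (fun i _ => hHint i)
  have hdivh0 : ∫ x in Ω, divh x = 0 := by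
    rw [setIntegral_eq_integral_of_forall_compl_eq_zero (fun x hx => ?_)]
    · rw [integral_finset_sum _ (fun i _ => hHint i)]
      exact Finset.sum_eq_zero (fun i _ =>
        GSLB.integral_fderiv_eq_zero (hdiffh i) (hhint i) _ (hHint i))
    · have hxK : x ∉ K := fun hxK => hx (hφΩ hxK)
      exact Finset.sum_eq_zero (fun i _ => hHsupp i x hxK)
  -- integrability of all the integrands on Ω
  have hφ2int : Integrable (fun x => φ x ^ 2) volume :=
    (hφcont.pow 2).integrable_of_hasCompactSupport
      (HasCompactSupport.intro hK (fun x hx => by simp [φz x hx]))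
  have int1 : IntegrableOn (fun x => ‖gradient φ x‖ ^ 2) Ω volume := by
    refine (Continuous.integrable_of_hasCompactSupport ?_
      (HasCompactSupport.intro hK (fun x hx => by simp [gφz x hx]))).integrableOn
    exact (hgradφcont.norm).pow 2
  have int3 : IntegrableOn (fun x => (1 / 4) * (‖gradient w x‖ / w x) ^ 2 * φ x ^ 2) Ω
      volume := by
    refine GSLB.integrableOn_of_zero_off_compact hΩ hK hKc hφΩ ?_
      (fun x hx => by simp [φz x hx])
    exact (continuousOn_const.mul (((hgradwcont.norm).div hwcont
      (fun x hx => (hwpos x hx).ne')).pow 2)).mul ((hφcont.pow 2).continuousOn)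
  have int4 : IntegrableOn (fun x => (1 / 2) * w x ^ (q - 2) * φ x ^ 2) Ω volume := by
    refine GSLB.integrableOn_of_zero_off_compact hΩ hK hKc hφΩ ?_
      (fun x hx => by simp [φz x hx])
    exact (continuousOn_const.mul (hwcont.rpow_const
      (fun x hx => Or.inl (hwpos x hx).ne'))).mul ((hφcont.pow 2).continuousOn)
  have int5 : IntegrableOn
      (fun x => ‖gradient φ x - (φ x / (2 * w x)) • gradient w x‖ ^ 2) Ω volume := by
    refine GSLB.integrableOn_of_zero_off_compact hΩ hK hKc hφΩ ?_
      (fun x hx => by simp [φz x hx, gφz x hx])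
    refine (ContinuousOn.norm ?_).pow 2
    exact (hgradφcont.continuousOn).sub
      (((hφcont.continuousOn).div (continuousOn_const.mul hwcont)
        (fun x hx => by have := hwpos x hx; show 2 * w x ≠ 0; positivity)).smul hgradwcont)
  -- bound for the integrability of V φ²
  obtain ⟨C, hC⟩ := hK.exists_bound_of_continuousOn
    ((continuousOn_const.mul (((hgradwcont.norm).div hwcont
      (fun x hx => (hwpos x hx).ne')).pow 2)).mono hφΩ :
      ContinuousOn (fun x => (1 / 4) * (‖gradient w x‖ / w x) ^ 2) K)
  have int2 : IntegrableOn (fun x => V x * φ x ^ 2) Ω volume := by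
    refine Integrable.mono' ((hφ2int.const_mul C).integrableOn) ?_ ?_
    · exact ((hVmeas.mul ((hφcont.pow 2).measurable)).aestronglyMeasurable)
    · filter_upwards [hV] with x hVx
      by_cases hxK : x ∈ K
      · have h1 : |V x| ≤ (1 / 4) * (‖gradient w x‖ / w x) ^ 2 := by
          rw [abs_le]
          constructor
          · nlinarith [hVx.1]
          · nlinarith [hVx.2, sq_nonneg (‖gradient w x‖ / w x)]
        have h2 : (1 / 4) * (‖gradient w x‖ / w x) ^ 2 ≤ C := by
          have : ‖(1 / 4) * (‖gradient w x‖ / w x) ^ 2‖ ≤ C := hC x hxK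
          rwa [Real.norm_eq_abs, abs_of_nonneg (by positivity : (0:ℝ) ≤ (1 / 4) * (‖gradient w x‖ / w x) ^ 2)] at this
        have h3 : ‖V x * φ x ^ 2‖ = |V x| * φ x ^ 2 := by
          rw [norm_mul]
          simp [Real.norm_eq_abs, abs_of_nonneg (sq_nonneg (φ x))]
        rw [h3]
        calc |V x| * φ x ^ 2 ≤ C * φ x ^ 2 := by
              apply mul_le_mul_of_nonneg_right _ (sq_nonneg _)
              linarith
          _ = C * φ x ^ 2 := rfl
      · simp [φz x hxK]
  -- key pointwise identity and the divergence trick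
  have key : ∫ x in Ω, (‖gradient φ x‖ ^ 2
        - (1 / 4) * (‖gradient w x‖ / w x) ^ 2 * φ x ^ 2
        - (1 / 2) * w x ^ (q - 2) * φ x ^ 2)
      = (∫ x in Ω, ‖gradient φ x - (φ x / (2 * w x)) • gradient w x‖ ^ 2)
        + ∫ x in Ω, divh x := by
    have i5 : Integrable (fun x => ‖gradient φ x - (φ x / (2 * w x)) • gradient w x‖ ^ 2)
        (volume.restrict Ω) := int5
    have i6 : Integrable divh (volume.restrict Ω) := hdivhint.integrableOn
    rw [← integral_add i5 i6]
    refine setIntegral_congr_fun hΩ.measurableSet (fun x hx => ?_)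
    exact GSLB.pointwise_identity hΩ hwC2 hwpos hφ hx (hwlap x hx)
  have hnrm_nonneg : 0 ≤ ∫ x in Ω,
      ‖gradient φ x - (φ x / (2 * w x)) • gradient w x‖ ^ 2 :=
    setIntegral_nonneg hΩ.measurableSet (fun x _ => by positivity)
  have hsplit : ∫ x in Ω, (‖gradient φ x‖ ^ 2
        - (1 / 4) * (‖gradient w x‖ / w x) ^ 2 * φ x ^ 2
        - (1 / 2) * w x ^ (q - 2) * φ x ^ 2)
      = (∫ x in Ω, ‖gradient φ x‖ ^ 2)
        - (∫ x in Ω, (1 / 4) * (‖gradient w x‖ / w x) ^ 2 * φ x ^ 2)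
        - ∫ x in Ω, (1 / 2) * w x ^ (q - 2) * φ x ^ 2 := by
    have i13 : Integrable (fun x => ‖gradient φ x‖ ^ 2
        - (1 / 4) * (‖gradient w x‖ / w x) ^ 2 * φ x ^ 2) (volume.restrict Ω) := int1.sub int3
    have i1 : Integrable (fun x => ‖gradient φ x‖ ^ 2) (volume.restrict Ω) := int1
    have i3 : Integrable (fun x => (1 / 4) * (‖gradient w x‖ / w x) ^ 2 * φ x ^ 2)
        (volume.restrict Ω) := int3
    have i4 : Integrable (fun x => (1 / 2) * w x ^ (q - 2) * φ x ^ 2)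
        (volume.restrict Ω) := int4
    rw [integral_sub i13 i4, integral_sub i1 i3]
  -- step 1 : V φ² ≥ - bound
  have step1 : -(∫ x in Ω, (1 / 4) * (‖gradient w x‖ / w x) ^ 2 * φ x ^ 2)
      ≤ ∫ x in Ω, V x * φ x ^ 2 := by
    rw [← integral_neg]
    have i3 : Integrable (fun x => (1 / 4) * (‖gradient w x‖ / w x) ^ 2 * φ x ^ 2)
        (volume.restrict Ω) := int3
    have i2 : Integrable (fun x => V x * φ x ^ 2) (volume.restrict Ω) := int2
    refine integral_mono_ae i3.neg i2 ?_
    filter_upwards [hV] with x hVx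
    have := mul_le_mul_of_nonneg_right hVx.1 (sq_nonneg (φ x))
    nlinarith [this]
  -- step 2 : pointwise comparison with M
  have step2 : ∫ x in Ω, (1 / 2) * M ^ (q - 2) * φ x ^ 2
      ≤ ∫ x in Ω, (1 / 2) * w x ^ (q - 2) * φ x ^ 2 := by
    refine setIntegral_mono_on ((hφ2int.const_mul _).integrableOn) int4
      hΩ.measurableSet (fun x hx => ?_)
    have h1 : M ^ (q - 2) ≤ w x ^ (q - 2) :=
      Real.rpow_le_rpow_of_nonpos (hwpos x hx) (hwM x hx) (by linarith)
    have h2 := mul_le_mul_of_nonneg_right h1 (sq_nonneg (φ x))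
    linarith
  have hMint : ∫ x in Ω, (1 / 2) * M ^ (q - 2) * φ x ^ 2
      = (1 / 2) * M ^ (q - 2) * ∫ x in Ω, φ x ^ 2 := by
    rw [integral_const_mul]
  linarith [key, hsplit, step1, step2, hMint, hnrm_nonneg, hdivh0]
end

section
/- Let N ≥ 1, let 1 ≤ q < 2, let Ω ⊆ ℝ^N be an open set and let w be a classical Lane–Emden solution on Ω with w(x) ≤ M for all x ∈ Ω, where M > 0. Let δ > 0 and let V : Ω → ℝ be measurable and satisfy (1/δ)·(1/δ − 1)·|∇w(x)/w(x)|² ≤ V(x) ≤ 0 for almost every x ∈ Ω. Then for every smooth function φ : ℝ^N → ℝ with compact support contained in Ω one has ∫_Ω |∇φ|² dx + ∫_Ω V φ² dx ≥ (1/δ)·M^{q−2}·∫_Ω φ² dx. -/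
open MeasureTheory

section Aux

open Filter

variable {N : ℕ}

/-- The integral of a directional derivative of a compactly supported `C¹` function vanishes. -/
lemma integral_fderiv_apply_eq_zero {g : EuclideanSpace ℝ (Fin N) → ℝ}
    (hg : ContDiff ℝ 1 g) (hgc : HasCompactSupport g) (v : EuclideanSpace ℝ (Fin N)) :
    ∫ x, fderiv ℝ g x v = 0 := by
  have hcont : Continuous fun x => fderiv ℝ g x v :=
    (hg.continuous_fderiv one_ne_zero).clm_apply continuous_const
  have hsupp : HasCompactSupport fun x => fderiv ℝ g x v := by
    apply HasCompactSupport.intro hgc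
    intro x hx
    have h0 : fderiv ℝ g x = 0 := by
      have : g =ᶠ[nhds x] fun _ => 0 := by
        filter_upwards [(isClosed_tsupport g).isOpen_compl.mem_nhds hx] with y hy
        exact image_eq_zero_of_notMem_tsupport hy
      rw [this.fderiv_eq]
      exact fderiv_const_apply _
    simp [h0]
  have hint : Integrable (fun x => fderiv ℝ g x v) volume :=
    hcont.integrable_of_hasCompactSupport hsupp
  have hgint : Integrable g volume :=
    (hg.continuous).integrable_of_hasCompactSupport hgc
  have key := integral_mul_fderiv_eq_neg_fderiv_mul_of_integrable
    (μ := (volume : Measure (EuclideanSpace ℝ (Fin N))))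
    (f := fun _ => (1 : ℝ)) (g := g) (v := v)
    (by simpa using (integrable_zero _ _ _ : Integrable (fun _ : EuclideanSpace ℝ (Fin N) => (0:ℝ)) volume))
    (by simpa using hint) (by simpa using hgint)
    (fun x _ => differentiableAt_const _) (fun x _ => hg.differentiable one_ne_zero x)
  simpa using key

/-- The squared norm of the gradient equals the sum of squared partial derivatives. -/
lemma norm_fderiv_sq_eq_sum (f : EuclideanSpace ℝ (Fin N) → ℝ) (x : EuclideanSpace ℝ (Fin N)) :
    ‖fderiv ℝ f x‖ ^ 2 = ∑ i : Fin N, (fderiv ℝ f x (EuclideanSpace.single i 1)) ^ 2 := by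
  set y : EuclideanSpace ℝ (Fin N) := (InnerProductSpace.toDual ℝ _).symm (fderiv ℝ f x) with hy
  have hnorm : ‖fderiv ℝ f x‖ = ‖y‖ := by
    rw [hy, LinearIsometryEquiv.norm_map]
  have happ : ∀ i : Fin N, fderiv ℝ f x (EuclideanSpace.single i 1) = y i := by
    intro i
    have := InnerProductSpace.toDual_symm_apply (𝕜 := ℝ)
      (x := EuclideanSpace.single i (1:ℝ)) (y := fderiv ℝ f x)
    rw [← hy] at this
    rw [← this, EuclideanSpace.inner_single_right]
    simp
  rw [hnorm]
  rw [EuclideanSpace.norm_eq, Real.sq_sqrt (by positivity)]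
  refine Finset.sum_congr rfl fun i _ => ?_
  rw [happ i, Real.norm_eq_abs, sq_abs]

lemma norm_gradient_eq (f : EuclideanSpace ℝ (Fin N) → ℝ) (x : EuclideanSpace ℝ (Fin N)) :
    ‖gradient f x‖ = ‖fderiv ℝ f x‖ := by
  unfold gradient
  rw [LinearIsometryEquiv.norm_map]

end Aux

set_option maxHeartbeats 1600000 in
/-- **Lower bound for the ground state energy**, general `δ` version: if
`0 ≥ V ≥ (1/δ)(1/δ - 1)|∇w/w|²` for a bounded Lane–Emden solution `w ≤ M`,
then the quadratic form is bounded below by `(1/δ) M^(q-2) ∫ φ²`. -/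
theorem ground_state_lower_bound_delta {N : ℕ} (hN : 1 ≤ N)
    {q : ℝ} (hq1 : 1 ≤ q) (hq2 : q < 2)
    {Ω : Set (EuclideanSpace ℝ (Fin N))} (hΩ : IsOpen Ω)
    {w : EuclideanSpace ℝ (Fin N) → ℝ} (hw : IsLaneEmdenSolution q Ω w)
    {M : ℝ} (hM : 0 < M) (hwM : ∀ x ∈ Ω, w x ≤ M)
    {δ : ℝ} (hδ : 0 < δ)
    {V : EuclideanSpace ℝ (Fin N) → ℝ} (hVmeas : Measurable V)
    (hV : ∀ᵐ x ∂(volume.restrict Ω),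
      (1 / δ) * (1 / δ - 1) * (‖gradient w x‖ / w x) ^ 2 ≤ V x ∧ V x ≤ 0)
    (φ : EuclideanSpace ℝ (Fin N) → ℝ) (hφ : ContDiff ℝ (⊤ : ℕ∞) φ)
    (hφc : HasCompactSupport φ) (hφΩ : tsupport φ ⊆ Ω) :
    (1 / δ) * M ^ (q - 2) * (∫ x in Ω, (φ x) ^ 2)
      ≤ (∫ x in Ω, ‖gradient φ x‖ ^ 2) + ∫ x in Ω, V x * (φ x) ^ 2 := by
  classical
  obtain ⟨hw1, hwpos, hweq⟩ := hw
  have hα : 0 < 1/δ := by positivity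
  have hgradφ : ∀ x, ‖gradient φ x‖ = ‖fderiv ℝ φ x‖ := fun x => norm_gradient_eq φ x
  have hgradw : ∀ x, ‖gradient w x‖ = ‖fderiv ℝ w x‖ := fun x => norm_gradient_eq w x
  simp only [hgradφ]
  simp only [hgradw] at hV
  set α : ℝ := 1/δ with hαdef
  have hμΩ : MeasurableSet Ω := hΩ.measurableSet
  have hKc : IsCompact (tsupport φ) := hφc
  have hwdiff : ∀ x ∈ Ω, DifferentiableAt ℝ w x := fun x hx =>
    (hw1.differentiableOn (by norm_num)).differentiableAt (hΩ.mem_nhds hx)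
  have hφdiff : Differentiable ℝ φ := hφ.differentiable (by simp)
  set r : Fin N → EuclideanSpace ℝ (Fin N) → ℝ :=
    fun i y => fderiv ℝ w y (EuclideanSpace.single i 1) with hrdef
  have hrC : ∀ i, ContDiffOn ℝ 1 (r i) Ω := fun i =>
    (hw1.fderiv_of_isOpen hΩ (by norm_num)).clm_apply contDiffOn_const
  have hrdiff : ∀ i, ∀ x ∈ Ω, DifferentiableAt ℝ (r i) x := fun i x hx =>
    ((hrC i).differentiableOn one_ne_zero).differentiableAt (hΩ.mem_nhds hx)
  set F : Fin N → EuclideanSpace ℝ (Fin N) → ℝ :=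
    fun i x => if x ∈ Ω then α * (φ x * φ x) * r i x * (w x)⁻¹ else 0 with hFdef
  have hFc : ∀ i, ∀ x ∈ Ω, F i =ᶠ[nhds x] fun y => α * (φ y * φ y) * r i y * (w y)⁻¹ := by
    intro i x hx
    filter_upwards [hΩ.mem_nhds hx] with y hy
    simp [hFdef, hy]
  have hF0 : ∀ i, ∀ x ∉ tsupport φ, F i =ᶠ[nhds x] fun _ => 0 := by
    intro i x hx
    filter_upwards [(isClosed_tsupport φ).isOpen_compl.mem_nhds hx] with y hy
    simp [hFdef, image_eq_zero_of_notMem_tsupport hy]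
  have hFderiv : ∀ i, ∀ x ∈ Ω, HasFDerivAt (F i)
      ((α * (φ x * φ x) * r i x) • ((-((w x) ^ 2)⁻¹) • fderiv ℝ w x)
        + (w x)⁻¹ • ((α * (φ x * φ x)) • fderiv ℝ (r i) x
           + r i x • (α • (φ x • fderiv ℝ φ x + φ x • fderiv ℝ φ x)))) x := by
    intro i x hx
    have hwne : w x ≠ 0 := (hwpos x hx).ne'
    have hinv : HasFDerivAt (fun y => (w y)⁻¹) ((-((w x)^2)⁻¹) • fderiv ℝ w x) x :=
      (hasDerivAt_inv hwne).comp_hasFDerivAt x (hwdiff x hx).hasFDerivAt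
    have hnum : HasFDerivAt (fun y => α * (φ y * φ y) * r i y)
        ((α * (φ x * φ x)) • fderiv ℝ (r i) x
          + r i x • (α • (φ x • fderiv ℝ φ x + φ x • fderiv ℝ φ x))) x :=
      (((hφdiff x).hasFDerivAt.mul (hφdiff x).hasFDerivAt).const_mul α).mul
        (hrdiff i x hx).hasFDerivAt
    exact (hnum.mul hinv).congr_of_eventuallyEq (hFc i x hx)
  have key1 : ∀ x ∈ Ω, ∀ i, fderiv ℝ (F i) x (EuclideanSpace.single i 1)
      = 2*α*φ x*(fderiv ℝ φ x (EuclideanSpace.single i 1))*(r i x)/w x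
        + α*(φ x)^2*(fderiv ℝ (r i) x (EuclideanSpace.single i 1))/w x
        - α*(φ x)^2*(r i x)^2/(w x)^2 := by
    intro x hx i
    have hwne : w x ≠ 0 := (hwpos x hx).ne'
    rw [(hFderiv i x hx).fderiv]
    simp only [ContinuousLinearMap.add_apply, ContinuousLinearMap.smul_apply, smul_eq_mul]
    field_simp
    ring
  -- regularity of F
  have hFC1 : ∀ i, ContDiff ℝ 1 (F i) := by
    intro i
    rw [contDiff_iff_contDiffAt]
    intro x
    by_cases hx : x ∈ Ω
    · have hG : ContDiffOn ℝ 1 (fun y => α * (φ y * φ y) * r i y * (w y)⁻¹) Ω := by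
        have hφ1 : ContDiffOn ℝ 1 φ Ω := (hφ.of_le (by exact_mod_cast le_top)).contDiffOn
        exact ((contDiffOn_const.mul (hφ1.mul hφ1)).mul (hrC i)).mul
          ((hw1.of_le (by norm_num)).inv (fun y hy => (hwpos y hy).ne'))
      exact (hG.contDiffAt (hΩ.mem_nhds hx)).congr_of_eventuallyEq (hFc i x hx)
    · by_cases hxK : x ∈ tsupport φ
      · exact absurd (hφΩ hxK) hx
      · exact contDiffAt_const.congr_of_eventuallyEq (hF0 i x hxK)
  have hFcs : ∀ i, HasCompactSupport (F i) := by
    intro i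
    apply HasCompactSupport.intro hKc
    intro x hx
    by_cases hΩx : x ∈ Ω <;> simp [hFdef, hΩx, image_eq_zero_of_notMem_tsupport hx]
  have hdF0 : ∀ i, ∀ x ∉ tsupport φ, fderiv ℝ (F i) x (EuclideanSpace.single i 1) = 0 := by
    intro i x hx
    rw [(hF0 i x hx).fderiv_eq]
    simp
  have hdFcont : ∀ i, Continuous fun x => fderiv ℝ (F i) x (EuclideanSpace.single i 1) :=
    fun i => ((hFC1 i).continuous_fderiv one_ne_zero).clm_apply continuous_const
  have hdFint : ∀ i, Integrable (fun x => fderiv ℝ (F i) x (EuclideanSpace.single i 1)) volume :=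
    fun i => (hdFcont i).integrable_of_hasCompactSupport
      (HasCompactSupport.intro hKc (fun x hx => hdF0 i x hx))
  -- the divergence has vanishing integral
  have hdiv0 : ∫ x in Ω, (∑ i, fderiv ℝ (F i) x (EuclideanSpace.single i 1)) = 0 := by
    rw [setIntegral_eq_integral_of_forall_compl_eq_zero (fun x hx => ?_)]
    · rw [integral_finset_sum _ (fun i _ => hdFint i)]
      exact Finset.sum_eq_zero fun i _ =>
        integral_fderiv_apply_eq_zero (hFC1 i) (hFcs i) _
    · exact Finset.sum_eq_zero fun i _ => hdF0 i x (fun hK => hx (hφΩ hK))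
  -- integrabilities
  have hφ2int : Integrable (fun x => (φ x)^2) volume := by
    refine ((hφ.continuous.pow 2)).integrable_of_hasCompactSupport ?_
    exact HasCompactSupport.intro hKc fun x hx => by
      simp [image_eq_zero_of_notMem_tsupport hx]
  have hg1int : Integrable (fun x => ‖fderiv ℝ φ x‖^2) volume := by
    refine ((hφ.continuous_fderiv (by simp)).norm.pow 2).integrable_of_hasCompactSupport ?_
    refine HasCompactSupport.intro hKc fun x hx => ?_
    have : fderiv ℝ φ x = 0 := by
      have h := support_fderiv_subset (𝕜 := ℝ) (f := φ)
      by_contra hne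
      exact hx (h hne)
    simp [this]
  -- bound for V on the support
  obtain ⟨C0, hC0⟩ : ∃ C0, ∀ x ∈ tsupport φ, ‖(‖fderiv ℝ w x‖ / w x)^2‖ ≤ C0 := by
    apply hKc.exists_bound_of_continuousOn
    apply ContinuousOn.mono _ hφΩ
    exact (((hw1.continuousOn_fderiv_of_isOpen hΩ (by norm_num)).norm.div
      (hw1.continuousOn) (fun x hx => (hwpos x hx).ne')).pow 2)
  have hVφ2int : Integrable (fun x => V x * (φ x)^2) (volume.restrict Ω) := by
    refine Integrable.mono ((hφ2int.restrict (s := Ω)).const_mul (|α*(α-1)| * C0)) ?_ ?_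
    · exact ((hVmeas.mul ((hφ.continuous.pow 2).measurable)).aestronglyMeasurable)
    · filter_upwards [hV] with x hVx
      by_cases hxK : x ∈ tsupport φ
      · have hm0 : (0:ℝ) ≤ (‖fderiv ℝ w x‖ / w x)^2 := sq_nonneg _
        have hmC : (‖fderiv ℝ w x‖ / w x)^2 ≤ C0 := by
          have := hC0 x hxK; rwa [Real.norm_eq_abs, abs_of_nonneg hm0] at this
        have hVabs : |V x| ≤ |α*(α-1)| * (‖fderiv ℝ w x‖ / w x)^2 := by
          rw [abs_of_nonpos hVx.2]
          have h1 : α*(α-1)*(‖fderiv ℝ w x‖ / w x)^2 ≤ V x := hVx.1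
          nlinarith [abs_nonneg (α*(α-1)), le_abs_self (α*(α-1)), neg_abs_le (α*(α-1)), hm0]
        rw [Real.norm_eq_abs, Real.norm_eq_abs, abs_mul, abs_mul]
        have hφ2 : |(φ x)^2| = (φ x)^2 := abs_of_nonneg (sq_nonneg _)
        rw [hφ2]
        have hC0nn : 0 ≤ C0 := le_trans (norm_nonneg _) (hC0 x hxK)
        calc |V x| * (φ x)^2 ≤ (|α*(α-1)| * C0) * (φ x)^2 := by
              apply mul_le_mul_of_nonneg_right _ (sq_nonneg _)
              calc |V x| ≤ |α*(α-1)| * (‖fderiv ℝ w x‖ / w x)^2 := hVabs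
                _ ≤ |α*(α-1)| * C0 := by
                    exact mul_le_mul_of_nonneg_left hmC (abs_nonneg _)
          _ ≤ |(|α*(α-1)| * C0)| * (φ x)^2 :=
              mul_le_mul_of_nonneg_right (le_abs_self _) (sq_nonneg _)
      · simp [image_eq_zero_of_notMem_tsupport hxK]
  -- pointwise (a.e.) inequality
  have hae : (fun x => (∑ i, fderiv ℝ (F i) x (EuclideanSpace.single i 1))
        + (α * M^(q-2)) * (φ x)^2)
      ≤ᵐ[volume.restrict Ω] fun x => ‖fderiv ℝ φ x‖^2 + V x * (φ x)^2 := by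
    filter_upwards [hV, ae_restrict_mem hμΩ] with x hVx hx
    have hW : 0 < w x := hwpos x hx
    have hWne : w x ≠ 0 := hW.ne'
    have hsum : ∑ i, fderiv ℝ (F i) x (EuclideanSpace.single i 1)
        = 2*α*φ x*(∑ i, (fderiv ℝ φ x (EuclideanSpace.single i 1))*(r i x))/w x
          + α*(φ x)^2*(∑ i, fderiv ℝ (r i) x (EuclideanSpace.single i 1))/w x
          - α*(φ x)^2*(∑ i, (r i x)^2)/(w x)^2 := by
      calc ∑ i, fderiv ℝ (F i) x (EuclideanSpace.single i 1)
          = ∑ i, ((2*α*φ x/w x) * ((fderiv ℝ φ x (EuclideanSpace.single i 1))*(r i x))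
              + ((α*(φ x)^2/w x) * (fderiv ℝ (r i) x (EuclideanSpace.single i 1))
                - (α*(φ x)^2/(w x)^2) * ((r i x)^2))) :=
            Finset.sum_congr rfl fun i _ => by rw [key1 x hx i]; ring
        _ = (2*α*φ x/w x) * (∑ i, (fderiv ℝ φ x (EuclideanSpace.single i 1))*(r i x))
              + ((α*(φ x)^2/w x) * (∑ i, fderiv ℝ (r i) x (EuclideanSpace.single i 1))
                - (α*(φ x)^2/(w x)^2) * (∑ i, (r i x)^2)) := by
            rw [Finset.sum_add_distrib, Finset.sum_sub_distrib,
              ← Finset.mul_sum, ← Finset.mul_sum, ← Finset.mul_sum]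
        _ = _ := by ring
    have hlap : (∑ i, fderiv ℝ (r i) x (EuclideanSpace.single i 1)) = -((w x)^(q-1)) := by
      have h := hweq x hx
      have : lap w x = ∑ i, fderiv ℝ (r i) x (EuclideanSpace.single i 1) := by
        simp only [lap, hrdef]
      linarith [h, this.symm.le, this.le]
    have hWq : (w x)^(q-1) = (w x)^(q-2) * w x := by
      have := Real.rpow_add_one hWne (q-2)
      rw [show q - 2 + 1 = q - 1 by ring] at this
      rw [this]
    have hpow : M^(q-2) ≤ (w x)^(q-2) :=
      Real.rpow_le_rpow_of_nonpos hW (hwM x hx) (by linarith)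
    have hnφ : ‖fderiv ℝ φ x‖^2 = ∑ i, (fderiv ℝ φ x (EuclideanSpace.single i 1))^2 :=
      norm_fderiv_sq_eq_sum φ x
    have hnw : (‖fderiv ℝ w x‖/w x)^2 = (∑ i, (r i x)^2)/(w x)^2 := by
      rw [div_pow, norm_fderiv_sq_eq_sum w x]
    have hV1 : α*(α-1)*((∑ i, (r i x)^2)/(w x)^2) ≤ V x := by
      have := hVx.1
      rw [hnw] at this
      exact this
    -- Picone
    have hsq : (0:ℝ) ≤ ∑ i, (fderiv ℝ φ x (EuclideanSpace.single i 1)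
        - (α*φ x/w x)*(r i x))^2 := Finset.sum_nonneg fun i _ => sq_nonneg _
    have hexp : ∑ i, (fderiv ℝ φ x (EuclideanSpace.single i 1) - (α*φ x/w x)*(r i x))^2
        = (∑ i, (fderiv ℝ φ x (EuclideanSpace.single i 1))^2)
          - 2*α*φ x*(∑ i, (fderiv ℝ φ x (EuclideanSpace.single i 1))*(r i x))/w x
          + α*α*(φ x)^2*(∑ i, (r i x)^2)/(w x)^2 := by
      calc ∑ i, (fderiv ℝ φ x (EuclideanSpace.single i 1) - (α*φ x/w x)*(r i x))^2
          = ∑ i, ((fderiv ℝ φ x (EuclideanSpace.single i 1))^2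
            + ((-(2*α*φ x/w x))*((fderiv ℝ φ x (EuclideanSpace.single i 1))*(r i x))
              + (α*α*(φ x)^2/(w x)^2)*((r i x)^2))) :=
            Finset.sum_congr rfl fun i _ => by ring
        _ = (∑ i, (fderiv ℝ φ x (EuclideanSpace.single i 1))^2)
            + ((-(2*α*φ x/w x))*(∑ i, (fderiv ℝ φ x (EuclideanSpace.single i 1))*(r i x))
              + (α*α*(φ x)^2/(w x)^2)*(∑ i, (r i x)^2)) := by
            rw [Finset.sum_add_distrib, Finset.sum_add_distrib,
              ← Finset.mul_sum, ← Finset.mul_sum]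
        _ = _ := by ring
    have A1 : 0 ≤ (∑ i, (fderiv ℝ φ x (EuclideanSpace.single i 1))^2)
          - 2*α*φ x*(∑ i, (fderiv ℝ φ x (EuclideanSpace.single i 1))*(r i x))/w x
          + α*α*(φ x)^2*(∑ i, (r i x)^2)/(w x)^2 := hexp ▸ hsq
    have A2 : α*(α-1)*(φ x)^2*(∑ i, (r i x)^2)/(w x)^2 ≤ V x * (φ x)^2 := by
      have h := mul_le_mul_of_nonneg_right hV1 (sq_nonneg (φ x))
      calc α*(α-1)*(φ x)^2*(∑ i, (r i x)^2)/(w x)^2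
          = α*(α-1)*((∑ i, (r i x)^2)/(w x)^2) * (φ x)^2 := by ring
        _ ≤ V x * (φ x)^2 := h
    have A3 : α*M^(q-2)*(φ x)^2 ≤ α*(w x)^(q-2)*(φ x)^2 := by
      have := mul_le_mul_of_nonneg_right
        (mul_le_mul_of_nonneg_left hpow hα.le) (sq_nonneg (φ x))
      calc α*M^(q-2)*(φ x)^2 = (α*M^(q-2))*(φ x)^2 := by ring
        _ ≤ (α*(w x)^(q-2))*(φ x)^2 := this
        _ = α*(w x)^(q-2)*(φ x)^2 := by ring
    have A4 : α*(φ x)^2*(-((w x)^(q-2)*(w x)))/w x = -(α*(w x)^(q-2)*(φ x)^2) := by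
      field_simp
    rw [hsum, hlap, hWq]
    rw [hnφ]
    rw [A4]
    ring_nf at A1 A2 A3 ⊢
    linarith [A1, A2, A3]
  -- put everything together
  have hInt3 : Integrable (fun x => ∑ i, fderiv ℝ (F i) x (EuclideanSpace.single i 1))
      (volume.restrict Ω) :=
    (integrable_finset_sum _ (fun i _ => hdFint i)).restrict
  have hIntφ2 : Integrable (fun x => (φ x)^2) (volume.restrict Ω) := hφ2int.restrict
  have hInt1 : Integrable (fun x => ‖fderiv ℝ φ x‖^2) (volume.restrict Ω) := hg1int.restrict
  have hmono := integral_mono_ae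
    (hInt3.add (hIntφ2.const_mul (α * M^(q-2)))) (hInt1.add hVφ2int) hae
  simp only [Pi.add_apply] at hmono
  rw [integral_add hInt3 (hIntφ2.const_mul (α * M^(q-2))),
      integral_add hInt1 hVφ2int, integral_const_mul, hdiv0] at hmono
  linarith [hmono]
end
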